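/- arXiv:2112.10589 — 4 statements merged into one kernel-verified Lean document; each statement's English description precedes it below -/
import Mathlib

section
/- Fix α > 0 and N ∈ ℕ, and let x, p : [0,∞) → ℝ^N be differentiable and solve the peakon ODE system. Assume p_j(t) ≥ 0 for all j and t, and Σ_{j=1}^N p_j(t) = 1 for all t ≥ 0. Define m(t) = Σ_{j=1}^N p_j(t) δ_{x_j(t)}, where δ_z is the Dirac measure at z. Then for all s, t ≥ 0, ‖m(s) − m(t)‖_BL ≤ (1/(2α) + 1/(2α²)) |s−t|. -/
open MeasureTheory Filter ZeroAtInfty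

/-- The peakon ODE system for the Camassa–Holm equation (with `sgn 0 = 0`),
posed on the time interval `[0,∞)`. -/
def PeakonSystem (α : ℝ) (N : ℕ) (x p : ℝ → Fin N → ℝ) : Prop :=
  ∀ j : Fin N, ∀ t : ℝ, 0 ≤ t →
    HasDerivWithinAt (fun τ => x τ j)
      ((1 / (2 * α)) * ∑ i, p t i * Real.exp (-|x t j - x t i| / α)) (Set.Ici 0) t ∧
    HasDerivWithinAt (fun τ => p τ j)
      ((1 / (2 * α ^ 2)) * p t j * ∑ i ∈ Finset.univ.erase j,
        p t i * Real.sign (x t j - x t i) * Real.exp (-|x t j - x t i| / α)) (Set.Ici 0) t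

/-- The peakon measure `m(t) = ∑ⱼ pⱼ(t) δ_{xⱼ(t)}`. -/
noncomputable def peakonMeasure (N : ℕ) (x p : ℝ → Fin N → ℝ) (t : ℝ) : Measure ℝ :=
  ∑ j, ENNReal.ofReal (p t j) • Measure.dirac (x t j)

/-- A test function for the bounded Lipschitz (Dudley) norm: `f ∈ C₀(ℝ)` with
`‖f‖_∞ + Lip(f) ≤ 1`. -/
def BLtest (f : C₀(ℝ, ℝ)) : Prop := ∃ K : NNReal, LipschitzWith K f ∧ ‖f‖ + (K : ℝ) ≤ 1

/-- The bounded Lipschitz (Dudley) distance `‖μ − ν‖_BL` between two finite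
(positive) measures. -/
noncomputable def blDist (μ ν : Measure ℝ) : ℝ :=
  sSup {r | ∃ f : C₀(ℝ, ℝ), BLtest f ∧ r = (∫ x, f x ∂μ) - ∫ x, f x ∂ν}

/- Auxiliary lemmas -/

lemma abs_real_sign_le (z : ℝ) : |Real.sign z| ≤ 1 := by
  rcases lt_trichotomy z 0 with h | h | h
  · simp [Real.sign_of_neg h]
  · simp [h]
  · simp [Real.sign_of_pos h]

lemma peakon_exp_le_one {α a : ℝ} (hα : 0 < α) : Real.exp (-|a| / α) ≤ 1 := by
  rw [Real.exp_le_one_iff]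
  exact div_nonpos_of_nonpos_of_nonneg (neg_nonpos.mpr (abs_nonneg _)) hα.le

lemma integral_peakon (N : ℕ) (x p : ℝ → Fin N → ℝ) (t : ℝ)
    (hp : ∀ j, 0 ≤ p t j) (f : C₀(ℝ, ℝ)) :
    (∫ y, f y ∂(peakonMeasure N x p t)) = ∑ j, p t j * f (x t j) := by
  have hint : ∀ z : ℝ, Integrable (fun y => f y) (Measure.dirac z) := by
    intro z
    refine ⟨f.continuous.aestronglyMeasurable, ?_⟩
    simp [HasFiniteIntegral, lintegral_dirac]
  rw [peakonMeasure, integral_finset_sum_measure]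
  · refine Finset.sum_congr rfl fun j _ => ?_
    rw [integral_smul_measure, integral_dirac, ENNReal.toReal_ofReal (hp j), smul_eq_mul]
  · exact fun j _ => (hint (x t j)).smul_measure ENNReal.ofReal_ne_top

/-- A derivative bound on `[0,∞)` gives a Lipschitz bound there. -/
lemma lip_of_deriv_bound {g g' : ℝ → ℝ} {C : ℝ}
    (hg : ∀ τ ∈ Set.Ici (0 : ℝ), HasDerivWithinAt g (g' τ) (Set.Ici 0) τ)
    (hb : ∀ τ ∈ Set.Ici (0 : ℝ), |g' τ| ≤ C) {s t : ℝ} (hs : 0 ≤ s) (ht : 0 ≤ t) :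
    |g s - g t| ≤ C * |s - t| := by
  have := Convex.norm_image_sub_le_of_norm_hasDerivWithin_le hg
    (fun τ hτ => by simpa [Real.norm_eq_abs] using hb τ hτ) (convex_Ici 0) ht hs
  simpa [Real.norm_eq_abs] using this

/-- for nonnegative peakon solutions of total momentum `1`, the map
`t ↦ m(t) = ∑ⱼ pⱼ(t) δ_{xⱼ(t)}` is Lipschitz for the bounded Lipschitz metric with
constant `1/(2α) + 1/(2α²)`. -/
theorem statement3 (α : ℝ) (hα : 0 < α) (N : ℕ) (x p : ℝ → Fin N → ℝ)
    (hode : PeakonSystem α N x p)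
    (hpos : ∀ j : Fin N, ∀ t : ℝ, 0 ≤ t → 0 ≤ p t j)
    (hmom : ∀ t : ℝ, 0 ≤ t → ∑ j, p t j = 1) :
    ∀ s t : ℝ, 0 ≤ s → 0 ≤ t →
      blDist (peakonMeasure N x p s) (peakonMeasure N x p t) ≤
        (1 / (2 * α) + 1 / (2 * α ^ 2)) * |s - t| := by
  intro s t hs ht
  have hα2 : (0:ℝ) < 2 * α := by linarith
  have hα2' : (0:ℝ) < 2 * α ^ 2 := by positivity
  have hCnonneg : 0 ≤ (1 / (2 * α) + 1 / (2 * α ^ 2)) * |s - t| := by positivity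
  -- Lipschitz bound for each x_j
  have hxlip : ∀ j : Fin N, |x s j - x t j| ≤ (1 / (2 * α)) * |s - t| := by
    intro j
    refine lip_of_deriv_bound (g' := fun τ =>
      (1 / (2 * α)) * ∑ i, p τ i * Real.exp (-|x τ j - x τ i| / α))
      (fun τ hτ => (hode j τ hτ).1) (fun τ hτ => ?_) hs ht
    have h1 : (0:ℝ) ≤ ∑ i, p τ i * Real.exp (-|x τ j - x τ i| / α) :=
      Finset.sum_nonneg fun i _ => mul_nonneg (hpos i τ hτ) (Real.exp_pos _).le
    have h2 : ∑ i, p τ i * Real.exp (-|x τ j - x τ i| / α) ≤ 1 := by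
      calc ∑ i, p τ i * Real.exp (-|x τ j - x τ i| / α)
          ≤ ∑ i, p τ i := Finset.sum_le_sum fun i _ => by
            nlinarith [peakon_exp_le_one (a := x τ j - x τ i) hα, hpos i τ hτ,
              (Real.exp_pos (-|x τ j - x τ i| / α)).le]
        _ = 1 := hmom τ hτ
    rw [abs_of_nonneg (mul_nonneg (by positivity) h1)]
    calc (1 / (2 * α)) * ∑ i, p τ i * Real.exp (-|x τ j - x τ i| / α)
        ≤ (1 / (2 * α)) * 1 := by
          exact mul_le_mul_of_nonneg_left h2 (by positivity)
      _ = 1 / (2 * α) := mul_one _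
  -- bound on each p_j derivative
  have hpderiv : ∀ j : Fin N, ∀ τ ∈ Set.Ici (0:ℝ),
      |(1 / (2 * α ^ 2)) * p τ j * ∑ i ∈ Finset.univ.erase j,
        p τ i * Real.sign (x τ j - x τ i) * Real.exp (-|x τ j - x τ i| / α)|
        ≤ (1 / (2 * α ^ 2)) * p τ j := by
    intro j τ hτ
    have hS : |∑ i ∈ Finset.univ.erase j,
        p τ i * Real.sign (x τ j - x τ i) * Real.exp (-|x τ j - x τ i| / α)| ≤ 1 := by
      calc |∑ i ∈ Finset.univ.erase j,
            p τ i * Real.sign (x τ j - x τ i) * Real.exp (-|x τ j - x τ i| / α)|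
          ≤ ∑ i ∈ Finset.univ.erase j,
            |p τ i * Real.sign (x τ j - x τ i) * Real.exp (-|x τ j - x τ i| / α)| :=
            Finset.abs_sum_le_sum_abs _ _
        _ ≤ ∑ i ∈ Finset.univ.erase j, p τ i := by
            refine Finset.sum_le_sum fun i _ => ?_
            rw [abs_mul, abs_mul, abs_of_nonneg (hpos i τ hτ),
              abs_of_nonneg (Real.exp_pos _).le]
            calc p τ i * |Real.sign (x τ j - x τ i)| * Real.exp (-|x τ j - x τ i| / α)
                ≤ p τ i * 1 * Real.exp (-|x τ j - x τ i| / α) :=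
                  mul_le_mul_of_nonneg_right
                    (mul_le_mul_of_nonneg_left (abs_real_sign_le _) (hpos i τ hτ))
                    (Real.exp_pos _).le
              _ = p τ i * Real.exp (-|x τ j - x τ i| / α) := by ring
              _ ≤ p τ i * 1 := mul_le_mul_of_nonneg_left
                    (peakon_exp_le_one (a := x τ j - x τ i) hα) (hpos i τ hτ)
              _ = p τ i := mul_one _
        _ ≤ ∑ i, p τ i := Finset.sum_le_sum_of_subset_of_nonneg
            (Finset.erase_subset _ _) (fun i _ _ => hpos i τ hτ)
        _ = 1 := hmom τ hτ
    rw [abs_mul, abs_mul, abs_of_nonneg (by positivity : (0:ℝ) ≤ 1 / (2 * α ^ 2)),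
      abs_of_nonneg (hpos j τ hτ)]
    calc (1 / (2 * α ^ 2)) * p τ j * |∑ i ∈ Finset.univ.erase j,
          p τ i * Real.sign (x τ j - x τ i) * Real.exp (-|x τ j - x τ i| / α)|
        ≤ (1 / (2 * α ^ 2)) * p τ j * 1 :=
          mul_le_mul_of_nonneg_left hS (mul_nonneg (by positivity) (hpos j τ hτ))
      _ = (1 / (2 * α ^ 2)) * p τ j := mul_one _
  apply Real.sSup_le _ hCnonneg
  rintro r ⟨f, ⟨K, hK, hsum⟩, rfl⟩
  have hfnorm : (0:ℝ) ≤ ‖f‖ := norm_nonneg f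
  have hKnn : (0:ℝ) ≤ (K:ℝ) := K.coe_nonneg
  have hfle1 : ‖f‖ ≤ 1 := by linarith
  have hKle1 : (K:ℝ) ≤ 1 := by linarith
  have hfb : ∀ y : ℝ, |f y| ≤ ‖f‖ := by
    intro y
    have := f.toBCF.norm_coe_le_norm y
    rwa [ZeroAtInftyContinuousMap.norm_toBCF_eq_norm] at this
  rw [integral_peakon N x p s (fun j => hpos j s hs) f,
    integral_peakon N x p t (fun j => hpos j t ht) f]
  -- split the difference
  have hsplit : (∑ j, p s j * f (x s j)) - ∑ j, p t j * f (x t j)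
      = ((∑ j, f (x s j) * p s j) - ∑ j, f (x s j) * p t j)
        + ∑ j, p t j * (f (x s j) - f (x t j)) := by
    rw [← Finset.sum_sub_distrib, ← Finset.sum_sub_distrib, ← Finset.sum_add_distrib]
    exact Finset.sum_congr rfl fun j _ => by ring
  -- bound the momentum part
  have hA : |(∑ j, f (x s j) * p s j) - ∑ j, f (x s j) * p t j|
      ≤ (‖f‖ * (1 / (2 * α ^ 2))) * |s - t| := by
    refine lip_of_deriv_bound (g := fun τ => ∑ j, f (x s j) * p τ j)
      (g' := fun τ => ∑ j, f (x s j) *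
        ((1 / (2 * α ^ 2)) * p τ j * ∑ i ∈ Finset.univ.erase j,
          p τ i * Real.sign (x τ j - x τ i) * Real.exp (-|x τ j - x τ i| / α)))
      (fun τ hτ => HasDerivWithinAt.fun_sum fun j _ =>
        ((hode j τ hτ).2).const_mul (f (x s j))) (fun τ hτ => ?_) hs ht
    calc |∑ j, f (x s j) *
          ((1 / (2 * α ^ 2)) * p τ j * ∑ i ∈ Finset.univ.erase j,
            p τ i * Real.sign (x τ j - x τ i) * Real.exp (-|x τ j - x τ i| / α))|
        ≤ ∑ j, |f (x s j) *
          ((1 / (2 * α ^ 2)) * p τ j * ∑ i ∈ Finset.univ.erase j,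
            p τ i * Real.sign (x τ j - x τ i) * Real.exp (-|x τ j - x τ i| / α))| :=
          Finset.abs_sum_le_sum_abs _ _
      _ ≤ ∑ j, ‖f‖ * ((1 / (2 * α ^ 2)) * p τ j) := by
          refine Finset.sum_le_sum fun j _ => ?_
          rw [abs_mul]
          exact mul_le_mul (hfb _) (hpderiv j τ hτ) (abs_nonneg _) hfnorm
      _ = ‖f‖ * (1 / (2 * α ^ 2)) * ∑ j, p τ j := by
          rw [Finset.mul_sum]
          exact Finset.sum_congr rfl fun j _ => by ring
      _ = ‖f‖ * (1 / (2 * α ^ 2)) := by rw [hmom τ hτ, mul_one]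
  -- bound the position part
  have hB : ∑ j, p t j * (f (x s j) - f (x t j))
      ≤ ((K:ℝ) * (1 / (2 * α))) * |s - t| := by
    calc ∑ j, p t j * (f (x s j) - f (x t j))
        ≤ ∑ j, p t j * ((K:ℝ) * ((1 / (2 * α)) * |s - t|)) := by
          refine Finset.sum_le_sum fun j _ => ?_
          refine mul_le_mul_of_nonneg_left ?_ (hpos j t ht)
          calc f (x s j) - f (x t j) ≤ |f (x s j) - f (x t j)| := le_abs_self _
            _ ≤ (K:ℝ) * |x s j - x t j| := by
                have := hK.dist_le_mul (x s j) (x t j)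
                rwa [Real.dist_eq, Real.dist_eq] at this
            _ ≤ (K:ℝ) * ((1 / (2 * α)) * |s - t|) :=
                mul_le_mul_of_nonneg_left (hxlip j) hKnn
      _ = (∑ j, p t j) * ((K:ℝ) * ((1 / (2 * α)) * |s - t|)) := by
          rw [Finset.sum_mul]
      _ = ((K:ℝ) * (1 / (2 * α))) * |s - t| := by rw [hmom t ht]; ring
  rw [hsplit]
  have habs : (0:ℝ) ≤ |s - t| := abs_nonneg _
  have h1 : (∑ j, f (x s j) * p s j) - ∑ j, f (x s j) * p t j
      ≤ (‖f‖ * (1 / (2 * α ^ 2))) * |s - t| := le_trans (le_abs_self _) hA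
  have hb1 : (0:ℝ) ≤ 1 / (2 * α) := by positivity
  have hb2 : (0:ℝ) ≤ 1 / (2 * α ^ 2) := by positivity
  nlinarith [mul_nonneg (mul_nonneg hb1 habs) (sub_nonneg.mpr hKle1),
    mul_nonneg (mul_nonneg hb2 habs) (sub_nonneg.mpr hfle1)]
end

section
/- Let F be a left-continuous integrable BV function, say F(x) = ν((−∞,x)) for a finite signed measure ν with F ∈ L¹(ℝ). Then for every finite signed measure μ on ℝ, ∫_ℝ |(F*μ)(x)| dx ≤ (‖F‖_{L¹} + ‖ν‖) · ‖μ‖_BL, where (F*μ)(x) = ∫_ℝ F(x−y) dμ(y). -/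
open MeasureTheory Filter ZeroAtInfty

/-- Integral of a real function against a finite signed measure,
via the Jordan decomposition. -/
noncomputable def sint (μ : MeasureTheory.SignedMeasure ℝ) (f : ℝ → ℝ) : ℝ :=
  ∫ x, f x ∂μ.toJordanDecomposition.posPart - ∫ x, f x ∂μ.toJordanDecomposition.negPart

/-- The total variation norm `‖μ‖` of a finite signed measure. -/
noncomputable def tvNorm (μ : MeasureTheory.SignedMeasure ℝ) : ℝ :=
  (μ.totalVariation Set.univ).toReal

/-- The bounded Lipschitz (Dudley) norm `‖μ‖_BL` of a finite signed measure. -/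
noncomputable def blNorm (μ : MeasureTheory.SignedMeasure ℝ) : ℝ :=
  sSup {r | ∃ f : C₀(ℝ, ℝ), BLtest f ∧ r = sint μ f}

open Set Topology

namespace Statement6Aux

lemma sm_apply (ν : SignedMeasure ℝ) {s : Set ℝ} (hs : MeasurableSet s) :
    ν s = (ν.toJordanDecomposition.posPart s).toReal
      - (ν.toJordanDecomposition.negPart s).toReal := by
  conv_lhs => rw [← ν.toSignedMeasure_toJordanDecomposition]
  rw [MeasureTheory.JordanDecomposition.toSignedMeasure,
    Measure.toSignedMeasure_sub_apply hs]
  rfl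

/-- Product integrability of `(x,y) ↦ F (x - y)` w.r.t. `volume.prod W`. -/
lemma prod_int {F : ℝ → ℝ} (hFm : Measurable F) (hFint : Integrable F volume)
    (W : Measure ℝ) [IsFiniteMeasure W] :
    Integrable (Function.uncurry fun x y => F (x - y)) (volume.prod W) := by
  have hm : Measurable (Function.uncurry fun x y : ℝ => F (x - y)) :=
    hFm.comp (measurable_fst.sub measurable_snd)
  refine ⟨hm.aestronglyMeasurable, ?_⟩
  have key : (∫⁻ p : ℝ × ℝ, (‖Function.uncurry (fun x y : ℝ => F (x - y)) p‖₊ : ENNReal)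
      ∂(volume.prod W)) < ⊤ := by
    rw [lintegral_prod_symm _ (hm.nnnorm.coe_nnreal_ennreal.aemeasurable)]
    have hins : ∀ y : ℝ, (∫⁻ x : ℝ, (‖Function.uncurry (fun x y : ℝ => F (x - y)) (x, y)‖₊
        : ENNReal)) = ∫⁻ x : ℝ, (‖F x‖₊ : ENNReal) := by
      intro y
      exact lintegral_sub_right_eq_self (fun x => (‖F x‖₊ : ENNReal)) y
    rw [lintegral_congr fun y => hins y, lintegral_const]
    exact ENNReal.mul_lt_top hFint.2 (measure_lt_top W _)
  exact key

end Statement6Aux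

open Statement6Aux

/-- Young-type inequality for the bounded Lipschitz norm.  For a
left-continuous integrable BV function `F(x) = ν((−∞,x))` and any finite signed
measure `μ`, `∫ |(F*μ)(x)| dx ≤ (‖F‖_{L¹} + ‖ν‖) ‖μ‖_BL`. -/
theorem statement6 (ν : MeasureTheory.SignedMeasure ℝ) (F : ℝ → ℝ)
    (hF : ∀ x : ℝ, F x = ν (Set.Iio x)) (hFint : Integrable F volume)
    (μ : MeasureTheory.SignedMeasure ℝ) :
    ∫⁻ x : ℝ, ENNReal.ofReal |sint μ (fun y => F (x - y))| ≤
      ENNReal.ofReal (((∫ x : ℝ, |F x|) + tvNorm ν) * blNorm μ) := by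
  classical
  set P : Measure ℝ := ν.toJordanDecomposition.posPart with hP
  set Nm : Measure ℝ := ν.toJordanDecomposition.negPart with hNm
  set L : ℝ := ∫ x : ℝ, |F x| with hL
  set V : ℝ := tvNorm ν with hV
  have hτfin : IsFiniteMeasure ν.totalVariation := by
    unfold MeasureTheory.SignedMeasure.totalVariation; infer_instance
  have hL0 : 0 ≤ L := integral_nonneg fun x => abs_nonneg _
  have hV0 : 0 ≤ V := ENNReal.toReal_nonneg
  -- degenerate case
  rcases eq_or_lt_of_le (by positivity : (0:ℝ) ≤ L + V) with hC | hC
  · -- L + V = 0, so V = 0, so F = 0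
    have hVz : V = 0 := le_antisymm (by linarith) hV0
    have hτz : ν.totalVariation Set.univ = 0 := by
      rcases (ENNReal.toReal_eq_zero_iff _).mp hVz with h | h
      · exact h
      · exact absurd h (measure_ne_top _ _)
    have hFz : ∀ x, F x = 0 := by
      intro x
      rw [hF x]
      apply ν.null_of_totalVariation_zero
      exact le_antisymm (hτz ▸ measure_mono (subset_univ _)) zero_le
    have : ∀ x : ℝ, sint μ (fun y => F (x - y)) = 0 := by
      intro x
      simp only [sint]
      simp [hFz]
    simp only [this, abs_zero, ENNReal.ofReal_zero, lintegral_zero]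
    exact zero_le
  -- main case
  set Q : Measure ℝ := μ.toJordanDecomposition.posPart with hQdef
  set Mm : Measure ℝ := μ.toJordanDecomposition.negPart with hMdef
  have hFrep : ∀ x, F x = (P (Iio x)).toReal - (Nm (Iio x)).toReal := fun x => by
    rw [hF x, sm_apply ν measurableSet_Iio]
  have hFm : Measurable F := by
    have h1 : Monotone fun x => (P (Iio x)).toReal := fun a b hab =>
      ENNReal.toReal_mono (measure_ne_top _ _) (measure_mono (Iio_subset_Iio hab))
    have h2 : Monotone fun x => (Nm (Iio x)).toReal := fun a b hab =>
      ENNReal.toReal_mono (measure_ne_top _ _) (measure_mono (Iio_subset_Iio hab))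
    have : F = fun x => (P (Iio x)).toReal - (Nm (Iio x)).toReal := funext hFrep
    rw [this]; exact (h1.measurable).sub (h2.measurable)
  set T : ℝ → ℝ := fun u => (ν.totalVariation (Iio u)).toReal with hT
  have hTmono : Monotone T := fun a b hab =>
    ENNReal.toReal_mono (measure_ne_top _ _) (measure_mono (Iio_subset_Iio hab))
  have hT0 : ∀ u, 0 ≤ T u := fun u => ENNReal.toReal_nonneg
  have hTV : ∀ u, T u ≤ V := fun u =>
    ENNReal.toReal_mono (measure_ne_top _ _) (measure_mono (subset_univ _))
  have hFd : ∀ a b : ℝ, a ≤ b → |F b - F a| ≤ T b - T a := by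
    intro a b hab
    have hu : Iio a ∪ Ico a b = Iio b := Iio_union_Ico_eq_Iio hab
    have hdisj : Disjoint (Iio a) (Ico a b) := by
      rw [Set.disjoint_left]; rintro x hx ⟨h1, h2⟩; exact absurd hx (not_lt.mpr h1)
    have hPs : P (Iio b) = P (Iio a) + P (Ico a b) := by
      rw [← hu, measure_union hdisj measurableSet_Ico]
    have hNs : Nm (Iio b) = Nm (Iio a) + Nm (Ico a b) := by
      rw [← hu, measure_union hdisj measurableSet_Ico]
    have hτs : ν.totalVariation (Iio b)
        = ν.totalVariation (Iio a) + ν.totalVariation (Ico a b) := by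
      rw [← hu, measure_union hdisj measurableSet_Ico]
    have e1 : F b - F a = (P (Ico a b)).toReal - (Nm (Ico a b)).toReal := by
      rw [hFrep a, hFrep b, hPs, hNs,
        ENNReal.toReal_add (measure_ne_top _ _) (measure_ne_top _ _),
        ENNReal.toReal_add (measure_ne_top _ _) (measure_ne_top _ _)]
      ring
    have e2 : T b - T a = (ν.totalVariation (Ico a b)).toReal := by
      simp only [hT]
      rw [hτs, ENNReal.toReal_add (measure_ne_top _ _) (measure_ne_top _ _)]
      ring
    have e3 : (ν.totalVariation (Ico a b)).toReal
        = (P (Ico a b)).toReal + (Nm (Ico a b)).toReal := by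
      have h4 : ν.totalVariation (Ico a b) = P (Ico a b) + Nm (Ico a b) := rfl
      rw [h4, ENNReal.toReal_add (measure_ne_top _ _) (measure_ne_top _ _)]
    rw [e1, e2, e3]
    refine (abs_sub _ _).trans ?_
    rw [abs_of_nonneg ENNReal.toReal_nonneg, abs_of_nonneg ENNReal.toReal_nonneg]
  have hTint : ∀ a b : ℝ, IntervalIntegrable T volume a b := fun a b =>
    (hTmono.monotoneOn _).intervalIntegrable
  have hTB : ∀ (R y' y : ℝ), y' ≤ y →
      (∫ x in (-R)..R, (T (x - y') - T (x - y))) ≤ (y - y') * V := by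
    intro R y' y hy
    have m1 : Monotone fun x : ℝ => T (x - y') := fun u v h => hTmono (by linarith)
    have m2 : Monotone fun x : ℝ => T (x - y) := fun u v h => hTmono (by linarith)
    rw [intervalIntegral.integral_sub ((m1.monotoneOn _).intervalIntegrable)
      ((m2.monotoneOn _).intervalIntegrable)]
    rw [intervalIntegral.integral_comp_sub_right T y',
      intervalIntegral.integral_comp_sub_right T y]
    have key1 : (∫ x in (-R - y)..(-R - y'), T x) + (∫ x in (-R - y')..(R - y'), T x)
        = ∫ x in (-R - y)..(R - y'), T x :=
      intervalIntegral.integral_add_adjacent_intervals (hTint _ _) (hTint _ _)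
    have key2 : (∫ x in (-R - y)..(R - y), T x) + (∫ x in (R - y)..(R - y'), T x)
        = ∫ x in (-R - y)..(R - y'), T x :=
      intervalIntegral.integral_add_adjacent_intervals (hTint _ _) (hTint _ _)
    have hb : (∫ x in (R - y)..(R - y'), T x) ≤ (y - y') * V := by
      have h5 := intervalIntegral.integral_mono_on (by linarith : R - y ≤ R - y')
        (hTint _ _) intervalIntegrable_const (fun x _ => hTV x)
      rw [intervalIntegral.integral_const, smul_eq_mul] at h5
      have h6 : (R - y' - (R - y)) = y - y' := by ring
      rw [h6] at h5
      exact h5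
    have ha : 0 ≤ ∫ x in (-R - y)..(-R - y'), T x :=
      intervalIntegral.integral_nonneg (by linarith) fun u _ => hT0 u
    linarith
  -- instances
  haveI hPfin : IsFiniteMeasure P := by rw [hP]; infer_instance
  haveI hNfin : IsFiniteMeasure Nm := by rw [hNm]; infer_instance
  haveI hQfin : IsFiniteMeasure Q := by rw [hQdef]; infer_instance
  haveI hMfin : IsFiniteMeasure Mm := by rw [hMdef]; infer_instance
  -- the convolution h
  set h : ℝ → ℝ := fun x => sint μ fun y => F (x - y) with hh
  have hIQ : Integrable (Function.uncurry fun x y => F (x - y)) (volume.prod Q) :=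
    prod_int hFm hFint Q
  have hIM : Integrable (Function.uncurry fun x y => F (x - y)) (volume.prod Mm) :=
    prod_int hFm hFint Mm
  have hQint : Integrable (fun x => ∫ y, F (x - y) ∂Q) volume := hIQ.integral_prod_left
  have hMint : Integrable (fun x => ∫ y, F (x - y) ∂Mm) volume := hIM.integral_prod_left
  have hsub : ∀ x, h x = (∫ y, F (x - y) ∂Q) - ∫ y, F (x - y) ∂Mm := fun x => rfl
  have hint : Integrable h volume :=
    (hQint.sub hMint).congr (Filter.Eventually.of_forall fun x => (hsub x).symm)
  have hQm : StronglyMeasurable (fun x => ∫ y, F (x - y) ∂Q) :=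
    ((hFm.comp (measurable_fst.sub measurable_snd)).stronglyMeasurable).integral_prod_right'
  have hMm' : StronglyMeasurable (fun x => ∫ y, F (x - y) ∂Mm) :=
    ((hFm.comp (measurable_fst.sub measurable_snd)).stronglyMeasurable).integral_prod_right'
  have hm : Measurable h := by
    have e : h = fun x => (∫ y, F (x - y) ∂Q) - ∫ y, F (x - y) ∂Mm := funext hsub
    rw [e]; exact hQm.measurable.sub hMm'.measurable
  have hFsub : ∀ y : ℝ, Integrable (fun x => F (x - y)) volume :=
    fun y => hFint.comp_sub_right y
  -- the key uniform bound
  have key : ∀ n : ℕ, (∫ x in Ioc (-(n:ℝ)) (n:ℝ), |h x|) ≤ (L + V) * blNorm μ := by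
    intro n
    set R : ℝ := (n : ℝ) with hR
    have hR0 : (0:ℝ) ≤ R := Nat.cast_nonneg n
    set s : ℝ → ℝ := fun x => if 0 ≤ h x then (1:ℝ) else -1 with hsdef
    have hsm : Measurable s :=
      Measurable.ite (measurableSet_le measurable_const hm) measurable_const measurable_const
    have hs1 : ∀ x, |s x| = 1 := by
      intro x; by_cases hx : 0 ≤ h x <;> simp [hsdef, hx]
    have hsb : ∀ x, ‖s x‖ ≤ 1 := fun x => le_of_eq ((Real.norm_eq_abs _).trans (hs1 x))
    have hsh : ∀ x, s x * h x = |h x| := by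
      intro x; by_cases hx : 0 ≤ h x
      · simp [hsdef, hx, abs_of_nonneg hx]
      · simp only [hsdef, hx, if_false, neg_one_mul]
        rw [abs_of_neg (not_le.mp hx)]
    set g : ℝ → ℝ := fun y => ∫ x in Ioc (-R) R, s x * F (x - y) with hgdef
    -- Fubini for each Jordan part
    have fub : ∀ (W : Measure ℝ), IsFiniteMeasure W →
        Integrable (Function.uncurry fun x y => F (x - y)) (volume.prod W) →
        ((∫ x in Ioc (-R) R, s x * (∫ y, F (x - y) ∂W)) = ∫ y, g y ∂W)
        ∧ Integrable (fun x => s x * (∫ y, F (x - y) ∂W))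
            (volume.restrict (Ioc (-R) R)) := by
      intro W hWf hIW
      haveI := hWf
      have hrestr : Integrable (Function.uncurry fun x y => F (x - y))
          ((volume.restrict (Ioc (-R) R)).prod W) := by
        rw [show (volume.restrict (Ioc (-R) R)).prod W
            = (volume.restrict (Ioc (-R) R)).prod (W.restrict univ) by
          rw [Measure.restrict_univ]]
        rw [Measure.prod_restrict]
        exact hIW.restrict
      have hprod : Integrable (Function.uncurry fun x y => s x * F (x - y))
          ((volume.restrict (Ioc (-R) R)).prod W) := by
        have := hrestr.bdd_mul
          ((hsm.comp measurable_fst).aestronglyMeasurable) (Filter.Eventually.of_forall fun p => hsb p.1)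
        exact this.congr (Filter.Eventually.of_forall fun p => rfl)
      have hswap := integral_integral_swap hprod
      have hpt : (∫ x in Ioc (-R) R, s x * (∫ y, F (x - y) ∂W))
          = ∫ x in Ioc (-R) R, (∫ y, s x * F (x - y) ∂W) := by
        refine setIntegral_congr_fun measurableSet_Ioc fun x _ => ?_
        exact (integral_const_mul _ _).symm
      constructor
      · rw [hpt]
        exact hswap
      · have hpt2 : (fun x => ∫ y, s x * F (x - y) ∂W) =ᵐ[volume.restrict (Ioc (-R) R)]
            fun x => s x * ∫ y, F (x - y) ∂W :=
          Filter.Eventually.of_forall fun x => integral_const_mul (s x) fun y => F (x - y)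
        exact (hprod.integral_prod_left).congr hpt2
    obtain ⟨fubQ, intQ'⟩ := fub Q hQfin hIQ
    obtain ⟨fubM, intM'⟩ := fub Mm hMfin hIM
    -- the set integral of |h| equals `sint μ g`
    have e4 : (∫ x in Ioc (-R) R, |h x|) = sint μ g := by
      have i1 : (∫ x in Ioc (-R) R, |h x|)
          = ∫ x in Ioc (-R) R,
              (s x * (∫ y, F (x - y) ∂Q) - s x * (∫ y, F (x - y) ∂Mm)) := by
        refine setIntegral_congr_fun measurableSet_Ioc fun x _ => ?_
        rw [← hsh x, hsub x]; ring
      rw [i1, integral_sub intQ' intM', fubQ, fubM]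
      rfl
    -- pointwise bound for g
    have gbound : ∀ y, |g y| ≤ L := by
      intro y
      calc |g y| ≤ ∫ x in Ioc (-R) R, |s x| * |F (x - y)| := by
            simpa [Real.norm_eq_abs] using
              norm_integral_le_integral_norm (μ := volume.restrict (Ioc (-R) R))
                (fun x => s x * F (x - y))
        _ = ∫ x in Ioc (-R) R, |F (x - y)| := by
            refine setIntegral_congr_fun measurableSet_Ioc fun x _ => ?_
            rw [hs1 x, one_mul]
        _ ≤ ∫ x, |F (x - y)| :=
            setIntegral_le_integral ((hFsub y).abs) (Filter.Eventually.of_forall fun x => abs_nonneg _)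
        _ = L := integral_sub_right_eq_self (fun x => |F x|) y
    -- Lipschitz estimate for g
    have glip : ∀ y' y : ℝ, y' ≤ y → |g y - g y'| ≤ (y - y') * V := by
      intro y' y hy
      have iy : Integrable (fun x => s x * F (x - y)) (volume.restrict (Ioc (-R) R)) :=
        ((hFsub y).restrict).bdd_mul hsm.aestronglyMeasurable (Filter.Eventually.of_forall hsb)
      have iy' : Integrable (fun x => s x * F (x - y')) (volume.restrict (Ioc (-R) R)) :=
        ((hFsub y').restrict).bdd_mul hsm.aestronglyMeasurable (Filter.Eventually.of_forall hsb)
      have d1 : g y - g y'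
          = ∫ x in Ioc (-R) R, (s x * F (x - y) - s x * F (x - y')) :=
        (integral_sub iy iy').symm
      have d2 : |g y - g y'| ≤ ∫ x in Ioc (-R) R, |F (x - y) - F (x - y')| := by
        rw [d1]
        calc |∫ x in Ioc (-R) R, (s x * F (x - y) - s x * F (x - y'))|
            ≤ ∫ x in Ioc (-R) R, |s x * F (x - y) - s x * F (x - y')| := by
              simpa [Real.norm_eq_abs] using
                norm_integral_le_integral_norm (μ := volume.restrict (Ioc (-R) R))
                  (fun x => s x * F (x - y) - s x * F (x - y'))
          _ = ∫ x in Ioc (-R) R, |F (x - y) - F (x - y')| := by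
              refine setIntegral_congr_fun measurableSet_Ioc fun x _ => ?_
              rw [← mul_sub, abs_mul, hs1 x, one_mul]
      have m1 : Monotone fun x : ℝ => T (x - y') := fun u v huv => hTmono (by linarith)
      have m2 : Monotone fun x : ℝ => T (x - y) := fun u v huv => hTmono (by linarith)
      have d3 : (∫ x in Ioc (-R) R, |F (x - y) - F (x - y')|)
          ≤ ∫ x in (-R)..R, (T (x - y') - T (x - y)) := by
        rw [← intervalIntegral.integral_of_le (by linarith : -R ≤ R)]
        refine intervalIntegral.integral_mono_on (by linarith) ?_ ?_ ?_
        · exact (((hFsub y).sub (hFsub y')).abs).intervalIntegrable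
        · exact ((m1.monotoneOn _).intervalIntegrable).sub
            ((m2.monotoneOn _).intervalIntegrable)
        · intro x _
          have := hFd (x - y) (x - y') (by linarith)
          calc |F (x - y) - F (x - y')| = |F (x - y') - F (x - y)| := abs_sub_comm _ _
            _ ≤ T (x - y') - T (x - y) := this
      exact d2.trans (d3.trans (hTB R y' y hy))
    have glipw : LipschitzWith (Real.toNNReal V) g := by
      apply LipschitzWith.of_dist_le_mul
      have hcoe : ((Real.toNNReal V : NNReal) : ℝ) = V := Real.coe_toNNReal V hV0
      intro a b
      rw [Real.dist_eq, Real.dist_eq, hcoe]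
      rcases le_total b a with hab | hab
      · rw [abs_of_nonneg (by linarith : (0:ℝ) ≤ a - b)]
        exact (glip b a hab).trans (le_of_eq (mul_comm _ _))
      · rw [abs_sub_comm a b, abs_of_nonneg (by linarith : (0:ℝ) ≤ b - a),
          abs_sub_comm (g a) (g b)]
        exact (glip a b hab).trans (le_of_eq (mul_comm _ _))
    -- g vanishes at infinity
    have bndg : ∀ y : ℝ, ‖g y‖
        ≤ ∫ u, (Ioc (-R - y) (R - y)).indicator (fun u => |F u|) u := by
      intro y
      have e5 : ∀ x : ℝ, (Ioc (-R - y) (R - y)).indicator (fun u => |F u|) (x - y)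
          = (Ioc (-R) R).indicator (fun x' => |F (x' - y)|) x := by
        intro x
        simp only [indicator_apply, mem_Ioc]
        by_cases hx : -R < x ∧ x ≤ R
        · rw [if_pos ⟨by linarith [hx.1], by linarith [hx.2]⟩, if_pos hx]
        · rw [if_neg, if_neg hx]
          intro hc; exact hx ⟨by linarith [hc.1], by linarith [hc.2]⟩
      calc ‖g y‖ ≤ ∫ x in Ioc (-R) R, |F (x - y)| := by
            rw [Real.norm_eq_abs]
            calc |g y| ≤ ∫ x in Ioc (-R) R, |s x| * |F (x - y)| := by
                  simpa [Real.norm_eq_abs] using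
                    norm_integral_le_integral_norm (μ := volume.restrict (Ioc (-R) R))
                      (fun x => s x * F (x - y))
              _ = ∫ x in Ioc (-R) R, |F (x - y)| := by
                  refine setIntegral_congr_fun measurableSet_Ioc fun x _ => ?_
                  rw [hs1 x, one_mul]
        _ = ∫ x, (Ioc (-R) R).indicator (fun x' => |F (x' - y)|) x :=
            (integral_indicator measurableSet_Ioc).symm
        _ = ∫ x, (Ioc (-R - y) (R - y)).indicator (fun u => |F u|) (x - y) := by
            exact integral_congr_ae (Filter.Eventually.of_forall fun x => (e5 x).symm)
        _ = ∫ u, (Ioc (-R - y) (R - y)).indicator (fun u => |F u|) u :=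
            integral_sub_right_eq_self _ y
    have hindm : ∀ y : ℝ, AEStronglyMeasurable
        (fun u => (Ioc (-R - y) (R - y)).indicator (fun u => |F u|) u) volume :=
      fun y => ((hFm.abs).indicator measurableSet_Ioc).aestronglyMeasurable
    have hindb : ∀ y : ℝ, ∀ᵐ u : ℝ ∂volume,
        ‖(Ioc (-R - y) (R - y)).indicator (fun u => |F u|) u‖ ≤ |F u| := by
      intro y
      refine Filter.Eventually.of_forall fun u => ?_
      rw [Real.norm_eq_abs]
      by_cases hu : u ∈ Ioc (-R - y) (R - y)
      · rw [indicator_of_mem hu, abs_abs]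
      · rw [indicator_of_notMem hu, abs_zero]; exact abs_nonneg _
    have hBtop : Tendsto
        (fun y : ℝ => ∫ u, (Ioc (-R - y) (R - y)).indicator (fun u => |F u|) u)
        atTop (𝓝 0) := by
      have := tendsto_integral_filter_of_dominated_convergence (μ := volume)
        (l := (atTop : Filter ℝ))
        (F := fun (y : ℝ) (u : ℝ) => (Ioc (-R - y) (R - y)).indicator (fun u => |F u|) u)
        (f := fun _ => (0:ℝ)) (fun u => |F u|)
        (Filter.Eventually.of_forall hindm)
        (Filter.Eventually.of_forall hindb)
        (hFint.abs)
        ?_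
      · simpa using this
      · refine Filter.Eventually.of_forall fun u => ?_
        have ev : ∀ᶠ y in (atTop : Filter ℝ),
            (Ioc (-R - y) (R - y)).indicator (fun u => |F u|) u = 0 := by
          filter_upwards [eventually_gt_atTop (R - u)] with y hy
          apply indicator_of_notMem
          intro hc; exact absurd hc.2 (by linarith)
        exact Tendsto.congr' (ev.mono fun y hy => hy.symm) tendsto_const_nhds
    have hBbot : Tendsto
        (fun y : ℝ => ∫ u, (Ioc (-R - y) (R - y)).indicator (fun u => |F u|) u)
        atBot (𝓝 0) := by
      have := tendsto_integral_filter_of_dominated_convergence (μ := volume)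
        (l := (atBot : Filter ℝ))
        (F := fun (y : ℝ) (u : ℝ) => (Ioc (-R - y) (R - y)).indicator (fun u => |F u|) u)
        (f := fun _ => (0:ℝ)) (fun u => |F u|)
        (Filter.Eventually.of_forall hindm)
        (Filter.Eventually.of_forall hindb)
        (hFint.abs)
        ?_
      · simpa using this
      · refine Filter.Eventually.of_forall fun u => ?_
        have ev : ∀ᶠ y in (atBot : Filter ℝ),
            (Ioc (-R - y) (R - y)).indicator (fun u => |F u|) u = 0 := by
          filter_upwards [eventually_lt_atBot (-R - u)] with y hy
          apply indicator_of_notMem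
          intro hc; exact absurd hc.1 (by linarith)
        exact Tendsto.congr' (ev.mono fun y hy => hy.symm) tendsto_const_nhds
    have gz : Tendsto g (cocompact ℝ) (𝓝 0) := by
      rw [cocompact_eq_atBot_atTop, tendsto_sup]
      exact ⟨squeeze_zero_norm bndg hBbot, squeeze_zero_norm bndg hBtop⟩
    -- package g as a C₀ function
    set G : C₀(ℝ, ℝ) := ⟨⟨g, glipw.continuous⟩, gz⟩ with hGdef
    have hGnorm : ‖G‖ ≤ L := by
      rw [← ZeroAtInftyContinuousMap.norm_toBCF_eq_norm]
      refine (BoundedContinuousFunction.norm_le hL0).mpr fun y => ?_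
      have e6 : G.toBCF y = g y := rfl
      rw [e6, Real.norm_eq_abs]
      exact gbound y
    set c : ℝ := (L + V)⁻¹ with hcdef
    have hc0 : 0 < c := inv_pos.mpr hC
    set f0 : C₀(ℝ, ℝ) := c • G with hf0def
    have hf0coe : ∀ y, f0 y = c * g y := fun y => by
      rw [hf0def, ZeroAtInftyContinuousMap.coe_smul]
      rfl
    have hBLf : BLtest f0 := by
      have hcv : ((Real.toNNReal (c * V) : NNReal) : ℝ) = c * V :=
        Real.coe_toNNReal _ (mul_nonneg hc0.le hV0)
      refine ⟨Real.toNNReal (c * V), ?_, ?_⟩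
      · apply LipschitzWith.of_dist_le_mul
        intro a b
        rw [hcv, Real.dist_eq, Real.dist_eq, hf0coe a, hf0coe b, ← mul_sub, abs_mul,
          abs_of_nonneg hc0.le]
        have hd : |g a - g b| ≤ V * |a - b| := by
          have h8 := glipw.dist_le_mul a b
          rwa [Real.dist_eq, Real.dist_eq, Real.coe_toNNReal V hV0] at h8
        calc c * |g a - g b| ≤ c * (V * |a - b|) := mul_le_mul_of_nonneg_left hd hc0.le
          _ = c * V * |a - b| := by ring
      · have hnorm : ‖f0‖ ≤ c * L := by
          rw [← ZeroAtInftyContinuousMap.norm_toBCF_eq_norm]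
          refine (BoundedContinuousFunction.norm_le (by positivity)).mpr fun y => ?_
          have e7 : f0.toBCF y = c * g y := hf0coe y
          rw [e7, Real.norm_eq_abs, abs_mul, abs_of_nonneg hc0.le]
          exact mul_le_mul_of_nonneg_left (gbound y) hc0.le
        rw [hcv]
        have h1 : c * (L + V) = 1 := inv_mul_cancel₀ (ne_of_gt hC)
        have h2 : c * L + c * V = 1 := by rw [← h1]; ring
        linarith
    have bdd : BddAbove {r | ∃ f : C₀(ℝ, ℝ), BLtest f ∧ r = sint μ f} := by
      refine ⟨(Q univ).toReal + (Mm univ).toReal, ?_⟩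
      rintro r ⟨f, ⟨K, hK, hsum⟩, rfl⟩
      have hf1 : ∀ x, |f x| ≤ 1 := by
        intro x
        have h1 : ‖f x‖ ≤ ‖f.toBCF‖ := f.toBCF.norm_coe_le_norm x
        rw [ZeroAtInftyContinuousMap.norm_toBCF_eq_norm, Real.norm_eq_abs] at h1
        have h2 : ‖f‖ ≤ 1 := by
          have := K.coe_nonneg; linarith
        linarith
      have hiQ : Integrable (⇑f) Q := f.toBCF.integrable Q
      have hiM : Integrable (⇑f) Mm := f.toBCF.integrable Mm
      have b1 : (∫ x, f x ∂Q) ≤ (Q univ).toReal := by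
        calc (∫ x, f x ∂Q) ≤ ∫ _x, (1:ℝ) ∂Q :=
              integral_mono hiQ (integrable_const 1) fun x => (le_abs_self _).trans (hf1 x)
          _ = (Q univ).toReal := by simp [measureReal_def]
      have b2 : -(∫ x, f x ∂Mm) ≤ (Mm univ).toReal := by
        have h3 : (∫ x, -f x ∂Mm) ≤ ∫ _x, (1:ℝ) ∂Mm :=
          integral_mono hiM.neg (integrable_const 1) fun x => (neg_le_abs _).trans (hf1 x)
        rw [integral_neg] at h3
        calc -(∫ x, f x ∂Mm) ≤ ∫ _x, (1:ℝ) ∂Mm := h3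
          _ = (Mm univ).toReal := by simp [measureReal_def]
      have e : sint μ (⇑f) = (∫ x, f x ∂Q) - ∫ x, f x ∂Mm := rfl
      rw [e]
      linarith
    have hle : sint μ (⇑f0) ≤ blNorm μ := le_csSup bdd ⟨f0, hBLf, rfl⟩
    have hsg : sint μ g = (L + V) * sint μ (⇑f0) := by
      have hcoe2 : (⇑f0 : ℝ → ℝ) = fun y => c * g y := funext hf0coe
      rw [hcoe2]
      show (∫ y, g y ∂Q) - (∫ y, g y ∂Mm)
          = (L + V) * ((∫ y, c * g y ∂Q) - ∫ y, c * g y ∂Mm)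
      rw [integral_const_mul, integral_const_mul]
      have h1 : (L + V) * c = 1 := mul_inv_cancel₀ (ne_of_gt hC)
      rw [mul_sub, ← mul_assoc, ← mul_assoc, h1, one_mul, one_mul]
    calc (∫ x in Ioc (-R) R, |h x|) = sint μ g := e4
      _ = (L + V) * sint μ (⇑f0) := hsg
      _ ≤ (L + V) * blNorm μ := mul_le_mul_of_nonneg_left hle (le_of_lt hC)
  -- pass to the limit
  have hUnion : (⋃ n : ℕ, Ioc (-(n:ℝ)) (n:ℝ)) = univ := by
    ext x
    simp only [mem_iUnion, mem_Ioc, mem_univ, iff_true]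
    obtain ⟨n, hn⟩ := exists_nat_gt |x|
    exact ⟨n, (abs_lt.mp hn).1, le_of_lt (abs_lt.mp hn).2⟩
  have hmono : Monotone fun n : ℕ => Ioc (-(n:ℝ)) (n:ℝ) := by
    intro a b hab
    refine Ioc_subset_Ioc ?_ ?_
    · simp only [neg_le_neg_iff, Nat.cast_le]; exact hab
    · exact_mod_cast hab
  have htend := tendsto_setIntegral_of_monotone (fun n : ℕ => measurableSet_Ioc) hmono
    (by rw [hUnion]; exact (hint.abs).integrableOn :
      IntegrableOn (fun x => |h x|) (⋃ n : ℕ, Ioc (-(n:ℝ)) (n:ℝ)) volume)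
  rw [hUnion, setIntegral_univ] at htend
  have habs : (∫ x, |h x|) ≤ (L + V) * blNorm μ :=
    le_of_tendsto htend (Filter.Eventually.of_forall key)
  have hfin : ENNReal.ofReal (∫ x, |h x|) = ∫⁻ x, ENNReal.ofReal |h x| :=
    ofReal_integral_eq_lintegral_ofReal hint.abs
      (Filter.Eventually.of_forall fun x => abs_nonneg _)
  calc (∫⁻ x : ℝ, ENNReal.ofReal |sint μ (fun y => F (x - y))|)
      = ∫⁻ x, ENNReal.ofReal |h x| := rfl
    _ = ENNReal.ofReal (∫ x, |h x|) := hfin.symm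
    _ ≤ ENNReal.ofReal ((L + V) * blNorm μ) := ENNReal.ofReal_le_ofReal habs
end

section
/- Let n ∈ ℕ and for 0 ≤ k ≤ n let F_k be a left-continuous integrable BV function, F_k(x) = ν_k((−∞,x)). Set L = Σ_{k=0}^n ‖ν_k‖ · (‖F_k‖_{L¹} + ‖ν_k‖). Then for every finite signed measure μ on ℝ with total variation norm ‖μ‖ ≤ 1, Σ_{k=0}^n ∫_ℝ (F_k*μ)(x)² dx ≤ L · ‖μ‖_BL. -/
open MeasureTheory Filter ZeroAtInfty

section Aux

open Set

lemma tail_Ioi (f : ℝ → ℝ) (hf : Integrable f volume) :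
    Tendsto (fun t : ℝ => ∫ x in Set.Ioi t, |f x|) atTop (nhds 0) := by
  have hfa : Integrable (fun x => |f x|) volume := hf.abs
  have h1 : Tendsto (fun t : ℝ => ∫ x in Set.Iic t, |f x|) atTop
      (nhds (∫ x in ⋃ t : ℝ, Set.Iic t, |f x|)) :=
    tendsto_setIntegral_of_monotone (fun t => measurableSet_Iic)
      (fun a b hab => Set.Iic_subset_Iic.2 hab) hfa.integrableOn
  have hU : (⋃ t : ℝ, Set.Iic t) = Set.univ := by
    ext x; simp [mem_iUnion]
  rw [hU, setIntegral_univ] at h1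
  have h2 : ∀ t : ℝ, ∫ x in Set.Ioi t, |f x| = (∫ x, |f x|) - ∫ x in Set.Iic t, |f x| := by
    intro t
    have := integral_add_compl (measurableSet_Iic (a := t)) hfa
    rw [Set.compl_Iic] at this
    linarith
  simp_rw [h2]
  simpa using (tendsto_const_nhds (x := ∫ x, |f x|)).sub h1

lemma tail_Iic (f : ℝ → ℝ) (hf : Integrable f volume) :
    Tendsto (fun t : ℝ => ∫ x in Set.Iic t, |f x|) atBot (nhds 0) := by
  have hfa : Integrable (fun x => |f x|) volume := hf.abs
  have h1 : Tendsto (fun t : ℝ => ∫ x in Set.Ioi (-t), |f x|) atTop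
      (nhds (∫ x in ⋃ t : ℝ, Set.Ioi (-t), |f x|)) :=
    tendsto_setIntegral_of_monotone (fun t => measurableSet_Ioi)
      (fun a b hab => Set.Ioi_subset_Ioi (by linarith)) hfa.integrableOn
  have hU : (⋃ t : ℝ, Set.Ioi (-t)) = Set.univ := by
    ext x; simp [mem_iUnion]; exact ⟨-(x-1), by linarith⟩
  rw [hU, setIntegral_univ] at h1
  have h2 : ∀ t : ℝ, ∫ x in Set.Iic (-t), |f x| = (∫ x, |f x|) - ∫ x in Set.Ioi (-t), |f x| := by
    intro t
    have := integral_add_compl (measurableSet_Iic (a := -t)) hfa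
    rw [Set.compl_Iic] at this
    linarith
  have h3 : Tendsto (fun t : ℝ => ∫ x in Set.Iic (-t), |f x|) atTop (nhds 0) := by
    simp_rw [h2]
    simpa using (tendsto_const_nhds (x := ∫ x, |f x|)).sub h1
  have h4 := h3.comp (tendsto_neg_atBot_atTop : Tendsto (fun t : ℝ => -t) atBot atTop)
  have : (fun t : ℝ => ∫ x in Set.Iic t, |f x|) = (fun t : ℝ => ∫ x in Set.Iic (-t), |f x|) ∘ (fun t : ℝ => -t) := by
    funext t; simp [Function.comp]
  rw [this]; exact h4

lemma setint_translate_Iic (g : ℝ → ℝ) (c y : ℝ) :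
    ∫ x in Set.Iic c, g (x - y) = ∫ u in Set.Iic (c - y), g u := by
  rw [← integral_indicator measurableSet_Iic, ← integral_indicator measurableSet_Iic]
  rw [← integral_sub_right_eq_self (fun u => (Set.Iic (c - y)).indicator g u) y]
  congr 1; funext x
  simp only [Set.indicator_apply, Set.mem_Iic, sub_le_sub_iff_right]

lemma setint_translate_Ioi (g : ℝ → ℝ) (c y : ℝ) :
    ∫ x in Set.Ioi c, g (x - y) = ∫ u in Set.Ioi (c - y), g u := by
  rw [← integral_indicator measurableSet_Ioi, ← integral_indicator measurableSet_Ioi]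
  rw [← integral_sub_right_eq_self (fun u => (Set.Ioi (c - y)).indicator g u) y]
  congr 1; funext x
  simp only [Set.indicator_apply, Set.mem_Ioi, sub_lt_sub_iff_right]

lemma sm_apply_eq (μ : SignedMeasure ℝ) {s : Set ℝ} (hs : MeasurableSet s) :
    μ s = (μ.toJordanDecomposition.posPart s).toReal - (μ.toJordanDecomposition.negPart s).toReal := by
  conv_lhs => rw [← μ.toSignedMeasure_toJordanDecomposition]
  exact Measure.toSignedMeasure_sub_apply hs

lemma abs_apply_le_tv (ν : SignedMeasure ℝ) {s : Set ℝ} (hs : MeasurableSet s) :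
    |ν s| ≤ (ν.totalVariation s).toReal := by
  rw [sm_apply_eq ν hs]
  have h1 : ν.totalVariation s = ν.toJordanDecomposition.posPart s
      + ν.toJordanDecomposition.negPart s := rfl
  rw [h1, ENNReal.toReal_add (measure_ne_top _ _) (measure_ne_top _ _)]
  have p1 : (0:ℝ) ≤ (ν.toJordanDecomposition.posPart s).toReal := ENNReal.toReal_nonneg
  have p2 : (0:ℝ) ≤ (ν.toJordanDecomposition.negPart s).toReal := ENNReal.toReal_nonneg
  rw [abs_sub_le_iff]; constructor <;> linarith

lemma tv_lintegral_Ico (τ : Measure ℝ) [IsFiniteMeasure τ] (a b : ℝ) :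
    ∫⁻ u : ℝ, τ (Set.Ico (u - b) (u - a)) = ENNReal.ofReal (b - a) * τ Set.univ := by
  have hS : MeasurableSet {p : ℝ × ℝ | p.1 - b ≤ p.2 ∧ p.2 < p.1 - a} :=
    (measurableSet_le (measurable_fst.sub measurable_const) measurable_snd).inter
      (measurableSet_lt measurable_snd (measurable_fst.sub measurable_const))
  set f : ℝ → ℝ → ENNReal := fun u t => ({p : ℝ × ℝ | p.1 - b ≤ p.2 ∧ p.2 < p.1 - a}).indicator 1 (u, t) with hf
  have h1 : ∀ u, ∫⁻ t, f u t ∂τ = τ (Set.Ico (u - b) (u - a)) := by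
    intro u
    have : f u = (Set.Ico (u - b) (u - a)).indicator 1 := by
      funext t; simp [hf, Set.indicator_apply, Set.mem_Ico]
    rw [this, lintegral_indicator_one measurableSet_Ico]
  have h2 : ∀ t, ∫⁻ u, f u t = volume (Set.Ioc (t + a) (t + b)) := by
    intro t
    have hmem : ∀ u : ℝ, (u, t) ∈ {p : ℝ × ℝ | p.1 - b ≤ p.2 ∧ p.2 < p.1 - a}
        ↔ u ∈ Set.Ioc (t + a) (t + b) := by
      intro u
      simp only [Set.mem_setOf_eq, Set.mem_Ioc]
      constructor <;> (rintro ⟨h1, h2⟩; exact ⟨by linarith, by linarith⟩)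
    have : (fun u => f u t) = (Set.Ioc (t + a) (t + b)).indicator 1 := by
      funext u
      rw [hf]
      simp only [Set.indicator_apply]
      rw [if_congr (hmem u) rfl rfl]
      rfl
    rw [this, lintegral_indicator_one measurableSet_Ioc]
  have hswap := lintegral_lintegral_swap (μ := volume) (ν := τ) (f := f)
    (measurable_one.indicator hS).aemeasurable
  calc ∫⁻ u : ℝ, τ (Set.Ico (u - b) (u - a)) = ∫⁻ u, ∫⁻ t, f u t ∂τ := by
        simp_rw [h1]
    _ = ∫⁻ t, ∫⁻ u, f u t ∂volume ∂τ := hswap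
    _ = ∫⁻ t, volume (Set.Ioc (t + a) (t + b)) ∂τ := by simp_rw [h2]
    _ = ∫⁻ _t : ℝ, ENNReal.ofReal (b - a) ∂τ := by
        simp_rw [Real.volume_Ioc, add_sub_add_left_eq_sub]
    _ = ENNReal.ofReal (b - a) * τ Set.univ := by rw [lintegral_const]

instance tv_finite (ν : SignedMeasure ℝ) : IsFiniteMeasure ν.totalVariation := by
  unfold MeasureTheory.SignedMeasure.totalVariation; infer_instance

lemma tv_translate_le (ν : SignedMeasure ℝ) (F : ℝ → ℝ) (hF : ∀ x, F x = ν (Set.Iio x))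
    (hFi : Integrable F volume) {a b : ℝ} (hab : a ≤ b) :
    ∫ u : ℝ, |F (u - b) - F (u - a)| ≤ (ν.totalVariation Set.univ).toReal * (b - a) := by
  have key : ∀ u : ℝ, |F (u - b) - F (u - a)| ≤ (ν.totalVariation (Set.Ico (u - b) (u - a))).toReal := by
    intro u
    have hun : Set.Iio (u - b) ∪ Set.Ico (u - b) (u - a) = Set.Iio (u - a) := by
      rw [Set.Iio_union_Ico (le_trans inf_le_left (le_refl (u - b)))]
      rw [sup_eq_right.2 (by linarith)]
    have hdisj : Disjoint (Set.Iio (u - b)) (Set.Ico (u - b) (u - a)) := by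
      rw [Set.disjoint_left]
      rintro x hx ⟨h1, _⟩
      exact absurd hx (not_lt.2 h1)
    have hsplit : ν (Set.Iio (u - a)) = ν (Set.Iio (u - b)) + ν (Set.Ico (u - b) (u - a)) := by
      rw [← hun]
      exact VectorMeasure.of_union hdisj measurableSet_Iio measurableSet_Ico
    have : F (u - b) - F (u - a) = -(ν (Set.Ico (u - b) (u - a))) := by
      rw [hF, hF, hsplit]; ring
    rw [this, abs_neg]
    exact abs_apply_le_tv ν measurableSet_Ico
  have hint : Integrable (fun u => |F (u - b) - F (u - a)|) volume :=
    ((hFi.comp_sub_right b).sub (hFi.comp_sub_right a)).abs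
  rw [MeasureTheory.integral_eq_lintegral_of_nonneg_ae
    (Filter.Eventually.of_forall fun u => abs_nonneg _) hint.aestronglyMeasurable]
  have hmono : ∫⁻ u, ENNReal.ofReal |F (u - b) - F (u - a)| ≤
      ∫⁻ u : ℝ, ν.totalVariation (Set.Ico (u - b) (u - a)) := by
    apply lintegral_mono
    intro u
    calc ENNReal.ofReal |F (u - b) - F (u - a)|
        ≤ ENNReal.ofReal ((ν.totalVariation (Set.Ico (u - b) (u - a))).toReal) :=
          ENNReal.ofReal_le_ofReal (key u)
      _ = ν.totalVariation (Set.Ico (u - b) (u - a)) :=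
          ENNReal.ofReal_toReal (measure_ne_top _ _)
  rw [tv_lintegral_Ico] at hmono
  calc (∫⁻ u, ENNReal.ofReal |F (u - b) - F (u - a)|).toReal
      ≤ (ENNReal.ofReal (b - a) * ν.totalVariation Set.univ).toReal :=
        ENNReal.toReal_mono (ENNReal.mul_ne_top ENNReal.ofReal_ne_top (measure_ne_top _ _)) hmono
    _ = (ν.totalVariation Set.univ).toReal * (b - a) := by
        rw [ENNReal.toReal_mul, ENNReal.toReal_ofReal (by linarith)]; ring

lemma tv_translate (ν : SignedMeasure ℝ) (F : ℝ → ℝ) (hF : ∀ x, F x = ν (Set.Iio x))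
    (hFi : Integrable F volume) (a b : ℝ) :
    ∫ u : ℝ, |F (u - b) - F (u - a)| ≤ (ν.totalVariation Set.univ).toReal * |b - a| := by
  rcases le_total a b with hab | hba
  · rw [abs_of_nonneg (by linarith : (0:ℝ) ≤ b - a)]
    exact tv_translate_le ν F hF hFi hab
  · rw [abs_of_nonpos (by linarith : b - a ≤ 0)]
    have h := tv_translate_le ν F hF hFi hba
    calc ∫ u : ℝ, |F (u - b) - F (u - a)| = ∫ u : ℝ, |F (u - a) - F (u - b)| := by
          congr 1; funext u; rw [abs_sub_comm]
      _ ≤ (ν.totalVariation Set.univ).toReal * (a - b) := h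
      _ = (ν.totalVariation Set.univ).toReal * -(b - a) := by ring

lemma conv_tendsto_atTop (f g : ℝ → ℝ)
    (hfi : Integrable f volume) (hgi : Integrable g volume) (Mf Mg : ℝ)
    (hbf : ∀ x, |f x| ≤ Mf) (hbg : ∀ x, |g x| ≤ Mg) :
    Tendsto (fun y => ∫ x : ℝ, f x * g (x - y)) atTop (nhds 0) := by
  have hfm := hfi.aestronglyMeasurable
  have key : ∀ y : ℝ, ‖∫ x : ℝ, f x * g (x - y)‖ ≤
      Mf * (∫ u in Set.Iic (y/2 - y), |g u|) + Mg * (∫ x in Set.Ioi (y/2), |f x|) := by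
    intro y
    have hint : Integrable (fun x => f x * g (x - y)) volume :=
      (hgi.comp_sub_right y).bdd_mul (c := Mf) hfm (Filter.Eventually.of_forall fun x => by simpa [Real.norm_eq_abs] using hbf x)
    have habs : Integrable (fun x => |f x * g (x - y)|) volume := hint.abs
    have hsplit : ∫ x : ℝ, |f x * g (x - y)| =
        (∫ x in Set.Iic (y/2), |f x * g (x - y)|) + ∫ x in Set.Ioi (y/2), |f x * g (x - y)| := by
      rw [← Set.compl_Iic]
      exact (integral_add_compl measurableSet_Iic habs).symm
    have hb1 : (∫ x in Set.Iic (y/2), |f x * g (x - y)|) ≤ Mf * ∫ u in Set.Iic (y/2 - y), |g u| := by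
      rw [← setint_translate_Iic (fun u => |g u|) (y/2) y, ← integral_const_mul]
      apply setIntegral_mono_on habs.integrableOn
        (((hgi.comp_sub_right y).abs.const_mul Mf).integrableOn) measurableSet_Iic
      intro x _
      rw [abs_mul]
      exact mul_le_mul_of_nonneg_right (hbf x) (abs_nonneg _)
    have hb2 : (∫ x in Set.Ioi (y/2), |f x * g (x - y)|) ≤ Mg * ∫ x in Set.Ioi (y/2), |f x| := by
      rw [← integral_const_mul]
      apply setIntegral_mono_on habs.integrableOn
        ((hfi.abs.const_mul Mg).integrableOn) measurableSet_Ioi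
      intro x _
      rw [abs_mul, mul_comm Mg]
      exact mul_le_mul_of_nonneg_left (hbg _) (abs_nonneg _)
    calc ‖∫ x : ℝ, f x * g (x - y)‖ ≤ ∫ x : ℝ, |f x * g (x - y)| := by
          simpa only [Real.norm_eq_abs] using norm_integral_le_integral_norm (μ := volume) (fun x => f x * g (x - y))
      _ = _ := hsplit
      _ ≤ _ := add_le_add hb1 hb2
  apply squeeze_zero_norm key
  have h1 : Tendsto (fun y : ℝ => y/2 - y) atTop atBot := by
    have : (fun y : ℝ => y/2 - y) = fun y : ℝ => y * (-(1/2)) := by funext y; ring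
    rw [this]
    exact Tendsto.atTop_mul_const_of_neg (by norm_num) tendsto_id
  have htg : Tendsto (fun y : ℝ => ∫ u in Set.Iic (y/2 - y), |g u|) atTop (nhds 0) :=
    (tail_Iic g hgi).comp h1
  have htf : Tendsto (fun y : ℝ => ∫ x in Set.Ioi (y/2), |f x|) atTop (nhds 0) :=
    (tail_Ioi f hfi).comp (tendsto_id.atTop_div_const two_pos)
  have := (htg.const_mul Mf).add (htf.const_mul Mg)
  simpa using this

lemma conv_zero_at_infty (f g : ℝ → ℝ)
    (hfi : Integrable f volume) (hgi : Integrable g volume) (Mf Mg : ℝ)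
    (hbf : ∀ x, |f x| ≤ Mf) (hbg : ∀ x, |g x| ≤ Mg) :
    Tendsto (fun y => ∫ x : ℝ, f x * g (x - y)) (cocompact ℝ) (nhds 0) := by
  rw [cocompact_eq_atBot_atTop, tendsto_sup]
  constructor
  · have h := conv_tendsto_atTop (fun x => f (-x)) (fun t => g (-t))
      hfi.comp_neg hgi.comp_neg Mf Mg (fun x => hbf (-x)) (fun x => hbg (-x))
    have heq : ∀ y : ℝ, ∫ x : ℝ, f x * g (x - y) =
        (fun y' => ∫ x : ℝ, f (-x) * g (-(x - y'))) (-y) := by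
      intro y
      simp only
      rw [← integral_neg_eq_self (fun t => f t * g (t - y)) volume]
      congr 1; funext x; ring_nf
    have h2 : Tendsto (fun y' => ∫ x : ℝ, f (-x) * g (-(x - y'))) atTop (nhds 0) := by
      exact h
    have := h2.comp (tendsto_neg_atBot_atTop : Tendsto (fun y : ℝ => -y) atBot atTop)
    apply this.congr
    intro y; exact (heq y).symm
  · exact conv_tendsto_atTop f g hfi hgi Mf Mg hbf hbg

lemma tvNorm_eq (μ : SignedMeasure ℝ) : tvNorm μ = (μ.toJordanDecomposition.posPart Set.univ).toReal
    + (μ.toJordanDecomposition.negPart Set.univ).toReal := by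
  rw [tvNorm]
  have : μ.totalVariation Set.univ = μ.toJordanDecomposition.posPart Set.univ
      + μ.toJordanDecomposition.negPart Set.univ := rfl
  rw [this, ENNReal.toReal_add (measure_ne_top _ _) (measure_ne_top _ _)]

lemma tvNorm_nonneg (μ : SignedMeasure ℝ) : 0 ≤ tvNorm μ := ENNReal.toReal_nonneg

lemma blNorm_bddAbove (μ : SignedMeasure ℝ) :
    BddAbove {r | ∃ f : C₀(ℝ, ℝ), BLtest f ∧ r = sint μ f} := by
  refine ⟨tvNorm μ, ?_⟩
  rintro r ⟨f, ⟨K, _, hK⟩, rfl⟩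
  have hnorm : ∀ x : ℝ, ‖f x‖ ≤ ‖f‖ := by
    intro x
    rw [← ZeroAtInftyContinuousMap.norm_toBCF_eq_norm]
    exact f.toBCF.norm_coe_le_norm x
  have hf1 : ‖f‖ ≤ 1 := by have := K.coe_nonneg; linarith
  have h1 : ‖∫ x, f x ∂μ.toJordanDecomposition.posPart‖ ≤
      ‖f‖ * (μ.toJordanDecomposition.posPart Set.univ).toReal :=
    norm_integral_le_of_norm_le_const (Filter.Eventually.of_forall hnorm)
  have h2 : ‖∫ x, f x ∂μ.toJordanDecomposition.negPart‖ ≤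
      ‖f‖ * (μ.toJordanDecomposition.negPart Set.univ).toReal :=
    norm_integral_le_of_norm_le_const (Filter.Eventually.of_forall hnorm)
  rw [Real.norm_eq_abs, abs_le] at h1 h2
  rw [sint, tvNorm_eq]
  have hp : (0:ℝ) ≤ (μ.toJordanDecomposition.posPart Set.univ).toReal := ENNReal.toReal_nonneg
  have hq : (0:ℝ) ≤ (μ.toJordanDecomposition.negPart Set.univ).toReal := ENNReal.toReal_nonneg
  nlinarith [h1.1, h1.2, h2.1, h2.2]

lemma blNorm_nonneg (μ : SignedMeasure ℝ) : 0 ≤ blNorm μ := by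
  apply le_csSup (blNorm_bddAbove μ)
  refine ⟨0, ⟨0, ?_, ?_⟩, ?_⟩
  · simpa using LipschitzWith.const (0:ℝ)
  · simp
  · simp [sint]

lemma sint_le_mul_blNorm (μ : SignedMeasure ℝ) (G : ℝ → ℝ) (bG LG C : ℝ)
    (hbG : 0 ≤ bG) (hLG : 0 ≤ LG) (hC : 0 < C) (hsum : bG + LG ≤ C)
    (hGc : Continuous G) (hG0 : Filter.Tendsto G (Filter.cocompact ℝ) (nhds 0))
    (hGb : ∀ y, |G y| ≤ bG) (hGlip : ∀ y z, |G y - G z| ≤ LG * |y - z|) :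
    sint μ G ≤ C * blNorm μ := by
  set f : C₀(ℝ, ℝ) := ⟨⟨fun y => G y / C, hGc.div_const C⟩, by simpa using hG0.div_const C⟩ with hf
  have hfco : ∀ y, f y = G y / C := fun y => rfl
  have hlip : LipschitzWith (LG / C).toNNReal f := by
    apply LipschitzWith.of_dist_le_mul
    intro y z
    rw [Real.coe_toNNReal _ (by positivity), Real.dist_eq, Real.dist_eq, hfco, hfco,
      div_sub_div_same, abs_div, abs_of_pos hC, div_mul_eq_mul_div]
    exact div_le_div_of_nonneg_right (hGlip y z) hC.le
  have hnorm : ‖f‖ ≤ bG / C := by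
    rw [← ZeroAtInftyContinuousMap.norm_toBCF_eq_norm]
    rw [BoundedContinuousFunction.norm_le (by positivity)]
    intro y
    show ‖G y / C‖ ≤ bG / C
    rw [Real.norm_eq_abs, abs_div, abs_of_pos hC]
    exact div_le_div_of_nonneg_right (hGb y) hC.le
  have hbl : BLtest f := by
    refine ⟨(LG / C).toNNReal, hlip, ?_⟩
    rw [Real.coe_toNNReal _ (by positivity)]
    have : bG / C + LG / C ≤ 1 := by
      rw [← add_div, div_le_one hC]; exact hsum
    linarith
  have hle : sint μ f ≤ blNorm μ := le_csSup (blNorm_bddAbove μ) ⟨f, hbl, rfl⟩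
  have hG : ∀ y, G y = C * f y := by
    intro y; rw [hfco, mul_div_cancel₀ _ hC.ne']
  have heq : sint μ G = C * sint μ f := by
    rw [sint, sint]
    have h1 : ∫ x, G x ∂μ.toJordanDecomposition.posPart
        = C * ∫ x, f x ∂μ.toJordanDecomposition.posPart := by
      rw [← integral_const_mul]; congr 1; funext x; exact hG x
    have h2 : ∫ x, G x ∂μ.toJordanDecomposition.negPart
        = C * ∫ x, f x ∂μ.toJordanDecomposition.negPart := by
      rw [← integral_const_mul]; congr 1; funext x; exact hG x
    rw [h1, h2]; ring
  rw [heq]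
  exact mul_le_mul_of_nonneg_left hle hC.le

lemma F_measurable (ν : SignedMeasure ℝ) (F : ℝ → ℝ) (hF : ∀ x, F x = ν (Set.Iio x)) :
    Measurable F := by
  have hFe : F = fun x => (ν.toJordanDecomposition.posPart (Set.Iio x)).toReal
      - (ν.toJordanDecomposition.negPart (Set.Iio x)).toReal := by
    funext x; rw [hF, sm_apply_eq ν measurableSet_Iio]
  rw [hFe]
  have hm : ∀ τ : Measure ℝ, IsFiniteMeasure τ → Monotone (fun x => (τ (Set.Iio x)).toReal) := by
    intro τ hτ a b hab
    exact ENNReal.toReal_mono (measure_ne_top τ _) (measure_mono (Set.Iio_subset_Iio hab))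
  exact ((hm _ inferInstance).measurable).sub ((hm _ inferInstance).measurable)

lemma F_bound (ν : SignedMeasure ℝ) (F : ℝ → ℝ) (hF : ∀ x, F x = ν (Set.Iio x)) (x : ℝ) :
    |F x| ≤ tvNorm ν := by
  rw [hF]
  refine le_trans (abs_apply_le_tv ν measurableSet_Iio) ?_
  exact ENNReal.toReal_mono (measure_ne_top _ _) (measure_mono (Set.subset_univ _))

lemma prod_integrable (F : ℝ → ℝ) (hFm : Measurable F) (hFi : Integrable F volume)
    (p : Measure ℝ) [IsFiniteMeasure p] :
    Integrable (fun z : ℝ × ℝ => F (z.1 - z.2)) (volume.prod p) := by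
  have hm : AEStronglyMeasurable (fun z : ℝ × ℝ => F (z.1 - z.2)) (volume.prod p) :=
    (hFm.comp (measurable_fst.sub measurable_snd)).aestronglyMeasurable
  rw [integrable_prod_iff' hm]
  constructor
  · exact Filter.Eventually.of_forall fun y => hFi.comp_sub_right y
  · have : (fun y : ℝ => ∫ x : ℝ, ‖F (x - y)‖) = fun _ => ∫ x : ℝ, ‖F x‖ := by
      funext y; exact integral_sub_right_eq_self (fun u => ‖F u‖) y
    rw [this]
    exact integrable_const _

lemma main_k (ν : SignedMeasure ℝ) (F : ℝ → ℝ) (hF : ∀ x, F x = ν (Set.Iio x))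
    (hFi : Integrable F volume) (μ : SignedMeasure ℝ) (hμ : tvNorm μ ≤ 1) :
    ∫⁻ x : ℝ, ENNReal.ofReal ((sint μ fun y => F (x - y)) ^ 2) ≤
      ENNReal.ofReal (tvNorm ν * ((∫ x : ℝ, |F x|) + tvNorm ν) * blNorm μ) := by
  set p := μ.toJordanDecomposition.posPart with hp
  set q := μ.toJordanDecomposition.negPart with hq
  have hFm : Measurable F := F_measurable ν F hF
  set Mν : ℝ := tvNorm ν with hMν
  have hMν0 : 0 ≤ Mν := tvNorm_nonneg ν
  set nF : ℝ := ∫ x : ℝ, |F x| with hnF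
  have hnF0 : 0 ≤ nF := integral_nonneg fun x => abs_nonneg _
  have hFb : ∀ x, |F x| ≤ Mν := F_bound ν F hF
  -- the convolution φ
  set A : ℝ → ℝ := fun x => ∫ y, F (x - y) ∂p with hA
  set B : ℝ → ℝ := fun x => ∫ y, F (x - y) ∂q with hB
  set φ : ℝ → ℝ := fun x => A x - B x with hφ
  have hφeq : ∀ x, (sint μ fun y => F (x - y)) = φ x := fun x => rfl
  have hASM : StronglyMeasurable A :=
    (hFm.comp (measurable_fst.sub measurable_snd)).stronglyMeasurable.integral_prod_right'
  have hBSM : StronglyMeasurable B :=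
    (hFm.comp (measurable_fst.sub measurable_snd)).stronglyMeasurable.integral_prod_right'
  have hφSM : StronglyMeasurable φ := hASM.sub hBSM
  have hAi : Integrable A volume := (prod_integrable F hFm hFi p).integral_prod_left
  have hBi : Integrable B volume := (prod_integrable F hFm hFi q).integral_prod_left
  have hφi : Integrable φ volume := hAi.sub hBi
  -- bound on φ
  have hμsum : (p Set.univ).toReal + (q Set.univ).toReal ≤ 1 := by
    rw [← tvNorm_eq μ]; exact hμ
  have hAb : ∀ x, |A x| ≤ Mν * (p Set.univ).toReal := by
    intro x
    have := norm_integral_le_of_norm_le_const (μ := p)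
      (f := fun y => F (x - y)) (C := Mν) (Filter.Eventually.of_forall fun y => hFb (x - y))
    simpa [Real.norm_eq_abs, measureReal_def] using this
  have hBb : ∀ x, |B x| ≤ Mν * (q Set.univ).toReal := by
    intro x
    have := norm_integral_le_of_norm_le_const (μ := q)
      (f := fun y => F (x - y)) (C := Mν) (Filter.Eventually.of_forall fun y => hFb (x - y))
    simpa [Real.norm_eq_abs, measureReal_def] using this
  have hφb : ∀ x, |φ x| ≤ Mν := by
    intro x
    have h1 := hAb x; have h2 := hBb x
    have h3 : |φ x| ≤ |A x| + |B x| := abs_sub _ _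
    have h4 : Mν * (p Set.univ).toReal + Mν * (q Set.univ).toReal ≤ Mν * 1 := by
      rw [← mul_add]; exact mul_le_mul_of_nonneg_left hμsum hMν0
    linarith
  -- define G
  set G : ℝ → ℝ := fun y => ∫ x, φ x * F (x - y) with hG
  have hprodφ : ∀ r : Measure ℝ, IsFiniteMeasure r →
      Integrable (fun z : ℝ × ℝ => φ z.1 * F (z.1 - z.2)) (volume.prod r) := by
    intro r hr
    exact (prod_integrable F hFm hFi r).bdd_mul (c := Mν)
      ((hφSM.comp_measurable measurable_fst).aestronglyMeasurable)
      (Filter.Eventually.of_forall fun z => by simpa [Real.norm_eq_abs] using hφb z.1)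
  have hintφF : ∀ y : ℝ, Integrable (fun x => φ x * F (x - y)) volume := fun y =>
    (hFi.comp_sub_right y).bdd_mul (c := Mν) hφSM.aestronglyMeasurable
      (Filter.Eventually.of_forall fun x => by simpa [Real.norm_eq_abs] using hφb x)
  -- G bounded
  have hGb : ∀ y, |G y| ≤ Mν * nF := by
    intro y
    have habsmul : (fun x => |φ x| * |F (x - y)|) = fun x => |φ x * F (x - y)| :=
      funext fun x => (abs_mul _ _).symm
    have h1 : |G y| ≤ ∫ x, |φ x| * |F (x - y)| := by
      simpa only [Real.norm_eq_abs, norm_mul] using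
        norm_integral_le_integral_norm (μ := volume) (fun x => φ x * F (x - y))
    have h2 : (∫ x, |φ x| * |F (x - y)|) ≤ ∫ x, Mν * |F (x - y)| := by
      apply integral_mono (by rw [habsmul]; exact (hintφF y).abs)
        (((hFi.comp_sub_right y).abs).const_mul Mν)
      intro x
      exact mul_le_mul_of_nonneg_right (hφb x) (abs_nonneg _)
    have h3 : (∫ x, Mν * |F (x - y)|) = Mν * nF := by
      rw [integral_const_mul, hnF]
      congr 1
      exact integral_sub_right_eq_self (fun u => |F u|) y
    linarith
  -- G Lipschitz
  have hGlip : ∀ y z, |G y - G z| ≤ Mν * Mν * |y - z| := by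
    intro y z
    have hsub : G y - G z = ∫ x, φ x * F (x - y) - φ x * F (x - z) :=
      (integral_sub (hintφF y) (hintφF z)).symm
    have h1 : |G y - G z| ≤ ∫ x, |φ x * F (x - y) - φ x * F (x - z)| := by
      rw [hsub]
      simpa only [Real.norm_eq_abs] using norm_integral_le_integral_norm
        (μ := volume) (fun x => φ x * F (x - y) - φ x * F (x - z))
    have hintd : Integrable (fun x => |F (x - y) - F (x - z)|) volume :=
      ((hFi.comp_sub_right y).sub (hFi.comp_sub_right z)).abs
    have h2 : (∫ x, |φ x * F (x - y) - φ x * F (x - z)|) ≤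
        ∫ x, Mν * |F (x - y) - F (x - z)| := by
      apply integral_mono ((hintφF y).sub (hintφF z)).abs (hintd.const_mul Mν)
      intro x
      show |φ x * F (x - y) - φ x * F (x - z)| ≤ Mν * |F (x - y) - F (x - z)|
      have e : φ x * F (x - y) - φ x * F (x - z) = φ x * (F (x - y) - F (x - z)) := by ring
      rw [e, abs_mul]
      exact mul_le_mul_of_nonneg_right (hφb x) (abs_nonneg _)
    have h3 : (∫ x, Mν * |F (x - y) - F (x - z)|) ≤ Mν * (Mν * |y - z|) := by
      rw [integral_const_mul]
      apply mul_le_mul_of_nonneg_left _ hMν0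
      exact tv_translate ν F hF hFi z y
    linarith
  have hGcont : Continuous G := by
    have : LipschitzWith (Mν * Mν).toNNReal G := by
      apply LipschitzWith.of_dist_le_mul
      intro y z
      rw [Real.dist_eq, Real.dist_eq, Real.coe_toNNReal _ (by positivity)]
      exact hGlip y z
    exact this.continuous
  have hG0 : Filter.Tendsto G (Filter.cocompact ℝ) (nhds 0) :=
    conv_zero_at_infty φ F hφi hFi Mν Mν hφb hFb
  -- Fubini : ∫ φ² = sint μ G
  have hfub : ∀ r : Measure ℝ, (hr : IsFiniteMeasure r) →
      ∫ x, φ x * (∫ y, F (x - y) ∂r) = ∫ y, G y ∂r := by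
    intro r hr
    have h1 : ∀ x, φ x * (∫ y, F (x - y) ∂r) = ∫ y, φ x * F (x - y) ∂r := by
      intro x; rw [integral_const_mul]
    simp_rw [h1]
    exact integral_integral_swap (hprodφ r hr)
  have hsq : ∀ x, φ x ^ 2 = φ x * A x - φ x * B x := by
    intro x; rw [hφ]; ring
  have hφAi : Integrable (fun x => φ x * A x) volume :=
    hAi.bdd_mul (c := Mν) hφSM.aestronglyMeasurable (Filter.Eventually.of_forall fun x => by simpa [Real.norm_eq_abs] using hφb x)
  have hφBi : Integrable (fun x => φ x * B x) volume :=
    hBi.bdd_mul (c := Mν) hφSM.aestronglyMeasurable (Filter.Eventually.of_forall fun x => by simpa [Real.norm_eq_abs] using hφb x)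
  have hkey : ∫ x, φ x ^ 2 = sint μ G := by
    calc ∫ x, φ x ^ 2 = ∫ x, (φ x * A x - φ x * B x) := by simp_rw [hsq]
      _ = (∫ x, φ x * A x) - ∫ x, φ x * B x := integral_sub hφAi hφBi
      _ = (∫ y, G y ∂p) - ∫ y, G y ∂q := by
          rw [← hfub p inferInstance, ← hfub q inferInstance]
      _ = sint μ G := rfl
  -- conclude
  have hφ2i : Integrable (fun x => φ x ^ 2) volume := by
    have : (fun x => φ x ^ 2) = fun x => φ x * φ x := by funext x; ring
    rw [this]
    exact hφi.bdd_mul (c := Mν) hφSM.aestronglyMeasurable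
      (Filter.Eventually.of_forall fun x => by simpa [Real.norm_eq_abs] using hφb x)
  have hlhs : ∫⁻ x : ℝ, ENNReal.ofReal ((sint μ fun y => F (x - y)) ^ 2) =
      ENNReal.ofReal (∫ x, φ x ^ 2) := by
    simp_rw [hφeq]
    exact (ofReal_integral_eq_lintegral_ofReal hφ2i
      (Filter.Eventually.of_forall fun x => sq_nonneg _)).symm
  rw [hlhs]
  apply ENNReal.ofReal_le_ofReal
  rw [hkey]
  rcases eq_or_lt_of_le hMν0 with hM0 | hMpos
  · -- Mν = 0 : then F = 0, φ = 0, G = 0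
    have hFz : ∀ x, F x = 0 := by
      intro x; have := hFb x; rw [← hM0] at this
      exact abs_nonpos_iff.mp this
    have hGz : G = fun _ => 0 := by
      funext y; rw [hG]; simp [hFz]
    rw [hGz]
    have : sint μ (fun _ => 0) = 0 := by simp [sint]
    rw [this, ← hM0]
    simp
  · have hC : 0 < Mν * (nF + Mν) := by positivity
    exact sint_le_mul_blNorm μ G (Mν * nF) (Mν * Mν) (Mν * (nF + Mν))
      (by positivity) (by positivity) hC (le_of_eq (by ring)) hGcont hG0 hGb hGlip

end Aux

/-- for left-continuous integrable BV functions `Fₖ(x) = νₖ((−∞,x))`,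
`L = ∑ₖ ‖νₖ‖(‖Fₖ‖_{L¹} + ‖νₖ‖)`, and any finite signed measure `μ` with `‖μ‖ ≤ 1`:
`∑ₖ ∫ (Fₖ*μ)(x)² dx ≤ L ‖μ‖_BL`. -/
theorem statement7 (n : ℕ) (ν : Fin (n + 1) → MeasureTheory.SignedMeasure ℝ)
    (F : Fin (n + 1) → ℝ → ℝ)
    (hF : ∀ k, ∀ x : ℝ, F k x = ν k (Set.Iio x))
    (hFint : ∀ k, Integrable (F k) volume)
    (μ : MeasureTheory.SignedMeasure ℝ) (hμ : tvNorm μ ≤ 1) :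
    ∑ k, ∫⁻ x : ℝ, ENNReal.ofReal ((sint μ fun y => F k (x - y)) ^ 2) ≤
      ENNReal.ofReal ((∑ k, tvNorm (ν k) * ((∫ x : ℝ, |F k x|) + tvNorm (ν k))) * blNorm μ) := by
  have hk : ∀ k : Fin (n + 1),
      ∫⁻ x : ℝ, ENNReal.ofReal ((sint μ fun y => F k (x - y)) ^ 2) ≤
        ENNReal.ofReal (tvNorm (ν k) * ((∫ x : ℝ, |F k x|) + tvNorm (ν k)) * blNorm μ) :=
    fun k => main_k (ν k) (F k) (hF k) (hFint k) μ hμ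
  have hnn : ∀ k : Fin (n + 1), k ∈ Finset.univ →
      0 ≤ tvNorm (ν k) * ((∫ x : ℝ, |F k x|) + tvNorm (ν k)) * blNorm μ := fun k _ =>
    mul_nonneg (mul_nonneg (tvNorm_nonneg _)
      (add_nonneg (integral_nonneg fun x => abs_nonneg _) (tvNorm_nonneg _))) (blNorm_nonneg μ)
  calc ∑ k, ∫⁻ x : ℝ, ENNReal.ofReal ((sint μ fun y => F k (x - y)) ^ 2)
      ≤ ∑ k, ENNReal.ofReal (tvNorm (ν k) * ((∫ x : ℝ, |F k x|) + tvNorm (ν k)) * blNorm μ) :=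
        Finset.sum_le_sum fun k _ => hk k
    _ = ENNReal.ofReal (∑ k, tvNorm (ν k) * ((∫ x : ℝ, |F k x|) + tvNorm (ν k)) * blNorm μ) :=
        (ENNReal.ofReal_sum_of_nonneg hnn).symm
    _ = ENNReal.ofReal ((∑ k, tvNorm (ν k) * ((∫ x : ℝ, |F k x|) + tvNorm (ν k))) * blNorm μ) := by
        rw [← Finset.sum_mul]
end

section
/- Let α > 0 and let ν be a finite signed Borel measure on ℝ such that ∫_ℝ e^{−|x−y|/α} dν(y) = 0 for every x ∈ ℝ. Then ν = 0. -/
open MeasureTheory Filter ZeroAtInfty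

section HelmholtzAux

open Set


lemma kernelRep (α : ℝ) (hα : 0 < α) (φ : ℝ → ℝ) (hφ : ContDiff ℝ (⊤ : ℕ∞) φ)
    (hs : HasCompactSupport φ) (y : ℝ) :
    ∫ t, (1/(2*α)) * (φ t - α^2 * deriv (deriv φ) t) * Real.exp (-|y - t| / α) = φ y := by
  have hαne : α ≠ 0 := ne_of_gt hα
  set c : ℝ → ℝ := deriv φ with hc_def
  set d : ℝ → ℝ := deriv c with hd_def
  have hφd : Differentiable ℝ φ := hφ.differentiable (by simp)
  have hc : ContDiff ℝ (⊤ : ℕ∞) c := (contDiff_infty_iff_deriv.mp hφ).2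
  have hcd : Differentiable ℝ c := hc.differentiable (by simp)
  have hd_cont : Continuous d := (contDiff_infty_iff_deriv.mp hc).2.continuous
  have hsc : HasCompactSupport c := hs.deriv
  have hsd : HasCompactSupport d := hsc.deriv
  set ψ : ℝ → ℝ := fun t => (1/(2*α)) * (φ t - α^2 * d t) with hψ_def
  set g : ℝ → ℝ := fun t => ψ t * Real.exp (-|y - t| / α) with hg_def
  have hψc : Continuous ψ :=
    continuous_const.mul (hφ.continuous.sub (continuous_const.mul hd_cont))
  have hψs : HasCompactSupport ψ := by
    rw [hasCompactSupport_iff_eventuallyEq] at *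
    filter_upwards [hs, hsd] with t h1 h2
    simp [hψ_def, h1, h2]
  have hgc : Continuous g :=
    hψc.mul ((((continuous_const.sub continuous_id).abs.neg).div_const α).rexp)
  have hgs : HasCompactSupport g := hψs.mul_right
  have hgint : Integrable g := hgc.integrable_of_hasCompactSupport hgs
  -- left antiderivative
  set H : ℝ → ℝ := fun t => Real.exp ((t - y)/α) * (φ t / 2 - (α/2) * c t) with hH_def
  set K : ℝ → ℝ := fun t => Real.exp ((y - t)/α) * (φ t / 2 + (α/2) * c t) with hK_def
  have hHderiv : ∀ t : ℝ, HasDerivAt H (Real.exp ((t - y)/α) * ψ t) t := by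
    intro t
    have hE : HasDerivAt (fun t => Real.exp ((t - y)/α)) (Real.exp ((t - y)/α) * (1/α)) t := by
      have h1 : HasDerivAt (fun t : ℝ => (t - y)/α) (1/α) t := by
        simpa using ((hasDerivAt_id t).sub_const y).div_const α
      simpa using h1.exp
    have hP : HasDerivAt (fun t => φ t / 2 - (α/2) * c t) (c t / 2 - (α/2) * d t) t :=
      ((hφd t).hasDerivAt.div_const 2).sub (((hcd t).hasDerivAt).const_mul (α/2))
    have := hE.mul hP
    refine this.congr_deriv ?_
    simp only [hψ_def]
    field_simp
    ring
  have hKderiv : ∀ t : ℝ, HasDerivAt (fun t => -K t)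
      (Real.exp ((y - t)/α) * ψ t) t := by
    intro t
    have hE : HasDerivAt (fun t => Real.exp ((y - t)/α)) (Real.exp ((y - t)/α) * (-(1/α))) t := by
      have h1 : HasDerivAt (fun t : ℝ => (y - t)/α) (-(1/α)) t := by
        have := ((hasDerivAt_id t).const_sub y).div_const α
        simpa [neg_div] using this
      simpa using h1.exp
    have hP : HasDerivAt (fun t => φ t / 2 + (α/2) * c t) (c t / 2 + (α/2) * d t) t :=
      ((hφd t).hasDerivAt.div_const 2).add (((hcd t).hasDerivAt).const_mul (α/2))
    have := (hE.mul hP).neg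
    refine this.congr_deriv ?_
    simp only [hψ_def]
    field_simp
    ring
  -- limits
  have hPtend : Tendsto (fun t => φ t / 2 - (α/2) * c t) (cocompact ℝ) (nhds 0) := by
    have hP : HasCompactSupport (fun t => φ t / 2 - (α/2) * c t) := by
      rw [hasCompactSupport_iff_eventuallyEq] at *
      filter_upwards [hs, hsc] with t h1 h2
      simp [h1, h2]
    simpa using hP.is_zero_at_infty
  have hQtend : Tendsto (fun t => φ t / 2 + (α/2) * c t) (cocompact ℝ) (nhds 0) := by
    have hQ : HasCompactSupport (fun t => φ t / 2 + (α/2) * c t) := by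
      rw [hasCompactSupport_iff_eventuallyEq] at *
      filter_upwards [hs, hsc] with t h1 h2
      simp [h1, h2]
    simpa using hQ.is_zero_at_infty
  have hEbot : Tendsto (fun t : ℝ => Real.exp ((t - y)/α)) atBot (nhds 0) := by
    apply Real.tendsto_exp_atBot.comp
    exact (tendsto_atBot_add_const_right atBot (-y) tendsto_id).atBot_div_const hα
  have hEtop : Tendsto (fun t : ℝ => Real.exp ((y - t)/α)) atTop (nhds 0) := by
    apply Real.tendsto_exp_atBot.comp
    have : Tendsto (fun t : ℝ => y - t) atTop atBot := by
      simpa [sub_eq_add_neg] using tendsto_atBot_add_const_left atTop y tendsto_neg_atTop_atBot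
    exact this.atBot_div_const hα
  have hatBotle : (atBot : Filter ℝ) ≤ cocompact ℝ := by
    rw [cocompact_eq_atBot_atTop]; exact le_sup_left
  have hatTople : (atTop : Filter ℝ) ≤ cocompact ℝ := by
    rw [cocompact_eq_atBot_atTop]; exact le_sup_right
  have hHtend : Tendsto H atBot (nhds 0) := by
    have := hEbot.mul (hPtend.mono_left hatBotle)
    simpa using this
  have hKtend : Tendsto (fun t => -K t) atTop (nhds 0) := by
    have := (hEtop.mul (hQtend.mono_left hatTople)).neg
    simpa using this
  -- FTC on Iic y
  have hIic : ∫ t in Iic y, g t = H y := by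
    have hderiv : ∀ t ∈ Iic y, HasDerivAt H (g t) t := by
      intro t ht
      have h1 := hHderiv t
      have : Real.exp ((t - y)/α) = Real.exp (-|y - t| / α) := by
        rw [abs_of_nonneg (sub_nonneg.2 ht)]; ring_nf
      rw [hg_def]
      simp only [mul_comm (ψ t) _] at *
      rwa [this] at h1
    have := integral_Iic_of_hasDerivAt_of_tendsto' hderiv hgint.integrableOn hHtend
    simpa using this
  have hIoi : ∫ t in Ioi y, g t = K y := by
    have hderiv : ∀ t ∈ Ici y, HasDerivAt (fun t => -K t) (g t) t := by
      intro t ht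
      have h1 := hKderiv t
      have : Real.exp ((y - t)/α) = Real.exp (-|y - t| / α) := by
        rw [abs_of_nonpos (sub_nonpos.2 ht)]; ring_nf
      rw [hg_def]
      simp only [mul_comm (ψ t) _] at *
      rwa [this] at h1
    have := integral_Ioi_of_hasDerivAt_of_tendsto' hderiv hgint.integrableOn hKtend
    rw [this]; simp
  have hsplit := intervalIntegral.integral_Iic_add_Ioi (b := y) (f := g) hgint.integrableOn hgint.integrableOn
  have hgval : ∫ t, g t = φ y := by
    rw [← hsplit, hIic, hIoi, hH_def, hK_def]
    simp only [sub_self, zero_div, Real.exp_zero]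
    ring
  have heq : (fun t => (1/(2*α)) * (φ t - α^2 * deriv (deriv φ) t) * Real.exp (-|y - t| / α))
      = g := by
    funext t
    simp only [hg_def, hψ_def, hd_def, hc_def]
    all_goals ring
  rw [← hgval]

lemma testEq (α : ℝ) (hα : 0 < α) (μp μn : Measure ℝ) [IsFiniteMeasure μp] [IsFiniteMeasure μn]
    (h : ∀ x : ℝ, ∫ y, Real.exp (-|x - y| / α) ∂μp = ∫ y, Real.exp (-|x - y| / α) ∂μn)
    (φ : ℝ → ℝ) (hφ : ContDiff ℝ (⊤ : ℕ∞) φ) (hs : HasCompactSupport φ) :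
    ∫ y, φ y ∂μp = ∫ y, φ y ∂μn := by
  set ψ : ℝ → ℝ := fun t => (1/(2*α)) * (φ t - α^2 * deriv (deriv φ) t) with hψ_def
  have hφd : Differentiable ℝ φ := hφ.differentiable (by simp)
  have hc : ContDiff ℝ (⊤ : ℕ∞) (deriv φ) := (contDiff_infty_iff_deriv.mp hφ).2
  have hd_cont : Continuous (deriv (deriv φ)) := (contDiff_infty_iff_deriv.mp hc).2.continuous
  have hψc : Continuous ψ :=
    continuous_const.mul (hφ.continuous.sub (continuous_const.mul hd_cont))
  have hψs : HasCompactSupport ψ := by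
    have h1 := hasCompactSupport_iff_eventuallyEq.mp hs
    have h2 := hasCompactSupport_iff_eventuallyEq.mp (hs.deriv.deriv)
    refine hasCompactSupport_iff_eventuallyEq.mpr ?_
    filter_upwards [h1, h2] with t h1 h2
    simp [hψ_def, h1, h2]
  have hψint : Integrable ψ := hψc.integrable_of_hasCompactSupport hψs
  set F : ℝ → ℝ → ℝ := fun y t => ψ t * Real.exp (-|y - t| / α) with hF_def
  have hFcont : Continuous (Function.uncurry F) := by
    apply (hψc.comp continuous_snd).mul
    apply Real.continuous_exp.comp
    exact ((continuous_fst.sub continuous_snd).abs.neg).div_const α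
  have hexple : ∀ y t : ℝ, Real.exp (-|y - t| / α) ≤ 1 := fun y t =>
    Real.exp_le_one_iff.mpr (div_nonpos_of_nonpos_of_nonneg (neg_nonpos.mpr (abs_nonneg _)) hα.le)
  have hexppos : ∀ y t : ℝ, 0 < Real.exp (-|y - t| / α) := fun y t => Real.exp_pos _
  have hFy_int : ∀ y : ℝ, Integrable (F y) := by
    intro y
    refine Integrable.mono hψint ?_ ?_
    · exact (hFcont.comp (Continuous.prodMk_right y)).aestronglyMeasurable
    · filter_upwards with t
      rw [Real.norm_eq_abs, Real.norm_eq_abs, abs_mul]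
      calc |ψ t| * |Real.exp (-|y - t| / α)| ≤ |ψ t| * 1 := by
            apply mul_le_mul_of_nonneg_left _ (abs_nonneg _)
            rw [abs_of_pos (hexppos y t)]; exact hexple y t
        _ = |ψ t| := mul_one _
  have key : ∀ (μ : Measure ℝ), IsFiniteMeasure μ →
      ∫ y, φ y ∂μ = ∫ t, ψ t * (∫ y, Real.exp (-|y - t| / α) ∂μ) := by
    intro μ hfin
    have hFint : Integrable (Function.uncurry F) (μ.prod volume) := by
      rw [integrable_prod_iff hFcont.aestronglyMeasurable]
      constructor
      · exact Filter.Eventually.of_forall fun y => hFy_int y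
      · have hmeas : AEStronglyMeasurable (fun y => ∫ t, ‖F y t‖) μ := by
          have : StronglyMeasurable (fun p : ℝ × ℝ => ‖Function.uncurry F p‖) :=
            hFcont.norm.stronglyMeasurable
          exact this.integral_prod_right'.aestronglyMeasurable
        refine Integrable.mono' (integrable_const (∫ t, ‖ψ t‖)) hmeas ?_
        filter_upwards with y
        rw [Real.norm_eq_abs, abs_of_nonneg (integral_nonneg (fun t => norm_nonneg _))]
        apply integral_mono (hFy_int y).norm hψint.norm
        intro t
        simp only [Real.norm_eq_abs, hF_def, abs_mul]
        calc |ψ t| * |Real.exp (-|y - t| / α)| ≤ |ψ t| * 1 := by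
              apply mul_le_mul_of_nonneg_left _ (abs_nonneg _)
              rw [abs_of_pos (hexppos y t)]; exact hexple y t
          _ = |ψ t| := mul_one _
    calc ∫ y, φ y ∂μ = ∫ y, (∫ t, F y t) ∂μ := by
          congr 1
          funext y
          rw [show (∫ t, F y t) = φ y from kernelRep α hα φ hφ hs y]
      _ = ∫ t, (∫ y, F y t ∂μ) := integral_integral_swap hFint
      _ = ∫ t, ψ t * (∫ y, Real.exp (-|y - t| / α) ∂μ) := by
          congr 1
          funext t
          exact integral_const_mul _ _
  rw [key μp inferInstance, key μn inferInstance]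
  congr 1
  funext t
  congr 1
  have h1 : ∫ y, Real.exp (-|y - t| / α) ∂μp = ∫ y, Real.exp (-|t - y| / α) ∂μp := by
    congr 1; funext y; rw [abs_sub_comm]
  have h2 : ∫ y, Real.exp (-|y - t| / α) ∂μn = ∫ y, Real.exp (-|t - y| / α) ∂μn := by
    congr 1; funext y; rw [abs_sub_comm]
  rw [h1, h2, h t]

lemma measure_eq (μp μn : Measure ℝ) [IsFiniteMeasure μp] [IsFiniteMeasure μn]
    (h : ∀ φ : ℝ → ℝ, ContDiff ℝ (⊤ : ℕ∞) φ → HasCompactSupport φ →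
      ∫ y, φ y ∂μp = ∫ y, φ y ∂μn) :
    μp = μn := by
  -- cutoff functions
  set cutf : ℝ → ℝ → ℝ → ℝ := fun a b t => Real.smoothTransition ((b - t)/(b - a)) with hcut_def
  set upf : ℝ → ℝ → ℝ → ℝ := fun a b t => Real.smoothTransition ((t - a)/(b - a)) with hup_def
  have hcut_smooth : ∀ a b : ℝ, ContDiff ℝ (⊤ : ℕ∞) (cutf a b) := fun a b =>
    Real.smoothTransition.contDiff.comp ((contDiff_const.sub contDiff_id).div_const _)
  have hup_smooth : ∀ a b : ℝ, ContDiff ℝ (⊤ : ℕ∞) (upf a b) := fun a b =>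
    Real.smoothTransition.contDiff.comp ((contDiff_id.sub contDiff_const).div_const _)
  have hcut_one : ∀ a b t : ℝ, a < b → t ≤ a → cutf a b t = 1 := by
    intro a b t hab hta
    apply Real.smoothTransition.one_of_one_le
    rw [le_div_iff₀ (by linarith)]
    linarith
  have hcut_zero : ∀ a b t : ℝ, a < b → b ≤ t → cutf a b t = 0 := by
    intro a b t hab hbt
    apply Real.smoothTransition.zero_of_nonpos
    apply div_nonpos_of_nonpos_of_nonneg (by linarith) (by linarith)
  have hup_one : ∀ a b t : ℝ, a < b → b ≤ t → upf a b t = 1 := by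
    intro a b t hab hbt
    apply Real.smoothTransition.one_of_one_le
    rw [le_div_iff₀ (by linarith)]
    linarith
  have hup_zero : ∀ a b t : ℝ, a < b → t ≤ a → upf a b t = 0 := by
    intro a b t hab hta
    apply Real.smoothTransition.zero_of_nonpos
    apply div_nonpos_of_nonpos_of_nonneg (by linarith) (by linarith)
  have hbound01 : ∀ x : ℝ, 0 ≤ Real.smoothTransition x ∧ Real.smoothTransition x ≤ 1 :=
    fun x => ⟨Real.smoothTransition.nonneg x, Real.smoothTransition.le_one x⟩
  apply Measure.ext_of_Iic
  intro a
  -- step functions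
  set test : ℕ → ℕ → ℝ → ℝ :=
    fun n m t => upf (-(n:ℝ)-1) (-(n:ℝ)) t * cutf a (a + 1/((m:ℝ)+1)) t with htest_def
  have hwidth : ∀ m : ℕ, (0:ℝ) < 1/((m:ℝ)+1) := by
    intro m; positivity
  have hnlt : ∀ n : ℕ, (-(n:ℝ)-1) < -(n:ℝ) := by intro n; linarith
  have htest_smooth : ∀ n m, ContDiff ℝ (⊤ : ℕ∞) (test n m) := fun n m =>
    ((hup_smooth _ _).mul (hcut_smooth _ _))
  have htest_supp : ∀ n m, HasCompactSupport (test n m) := by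
    intro n m
    apply HasCompactSupport.intro (isCompact_Icc (a := -(n:ℝ)-1) (b := a + 1/((m:ℝ)+1)))
    intro t ht
    simp only [Set.mem_Icc, not_and_or, not_le] at ht
    rcases ht with ht | ht
    · have h0 : upf (-(n:ℝ)-1) (-(n:ℝ)) t = 0 := hup_zero _ _ t (hnlt n) ht.le
      simp only [htest_def, h0, zero_mul]
    · have h0 : cutf a (a + 1/((m:ℝ)+1)) t = 0 :=
        hcut_zero a _ t (by linarith [hwidth m]) ht.le
      simp only [htest_def, h0, mul_zero]
  have htest_bd : ∀ n m t, ‖test n m t‖ ≤ 1 := by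
    intro n m t
    rw [Real.norm_eq_abs, abs_mul]
    calc |upf _ _ t| * |cutf _ _ t| ≤ 1 * 1 := by
          apply mul_le_mul _ _ (abs_nonneg _) zero_le_one
          · rw [abs_of_nonneg (hbound01 _).1]; exact (hbound01 _).2
          · rw [abs_of_nonneg (hbound01 _).1]; exact (hbound01 _).2
      _ = 1 := mul_one 1
  have hcut_bd : ∀ a' b' t : ℝ, ‖cutf a' b' t‖ ≤ 1 := by
    intro a' b' t
    rw [Real.norm_eq_abs, abs_of_nonneg (hbound01 _).1]; exact (hbound01 _).2
  -- step 1 : integrals of cutf agree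
  have step1 : ∀ m : ℕ, ∫ y, cutf a (a + 1/((m:ℝ)+1)) y ∂μp
      = ∫ y, cutf a (a + 1/((m:ℝ)+1)) y ∂μn := by
    intro m
    have hlim : ∀ (t : ℝ), Filter.Tendsto (fun n : ℕ => test n m t) Filter.atTop
        (nhds (cutf a (a + 1/((m:ℝ)+1)) t)) := by
      intro t
      have hev : ∀ᶠ n : ℕ in Filter.atTop, test n m t = cutf a (a + 1/((m:ℝ)+1)) t := by
        filter_upwards [(tendsto_natCast_atTop_atTop (R := ℝ)).eventually_ge_atTop (-t)]
          with n hn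
        have : upf (-(n:ℝ)-1) (-(n:ℝ)) t = 1 := hup_one _ _ t (hnlt n) (by linarith)
        simp [htest_def, this]
      exact Filter.Tendsto.congr' (hev.mono fun n hn => hn.symm) tendsto_const_nhds
    have dct : ∀ (μ : Measure ℝ), IsFiniteMeasure μ →
        Filter.Tendsto (fun n : ℕ => ∫ y, test n m y ∂μ) Filter.atTop
        (nhds (∫ y, cutf a (a + 1/((m:ℝ)+1)) y ∂μ)) := by
      intro μ hfin
      apply tendsto_integral_of_dominated_convergence (fun _ => (1:ℝ))
      · exact fun n => ((htest_smooth n m).continuous).aestronglyMeasurable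
      · exact integrable_const 1
      · exact fun n => Filter.Eventually.of_forall (fun t => htest_bd n m t)
      · exact Filter.Eventually.of_forall hlim
    have hp := dct μp inferInstance
    have hn := dct μn inferInstance
    have heq : (fun n : ℕ => ∫ y, test n m y ∂μp) = fun n : ℕ => ∫ y, test n m y ∂μn := by
      funext n
      exact h (test n m) (htest_smooth n m) (htest_supp n m)
    rw [heq] at hp
    exact tendsto_nhds_unique hp hn
  -- step 2 : pass to indicator of Iic a
  have hlim2 : ∀ t : ℝ, Filter.Tendsto (fun m : ℕ => cutf a (a + 1/((m:ℝ)+1)) t)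
      Filter.atTop (nhds (Set.indicator (Set.Iic a) (fun _ => (1:ℝ)) t)) := by
    intro t
    rcases le_or_gt t a with hta | hat
    · have : ∀ m : ℕ, cutf a (a + 1/((m:ℝ)+1)) t = 1 := fun m =>
        hcut_one a _ t (by linarith [hwidth m]) hta
      simp only [this, Set.indicator_of_mem (Set.mem_Iic.mpr hta)]
      exact tendsto_const_nhds
    · have hev : ∀ᶠ m : ℕ in Filter.atTop, cutf a (a + 1/((m:ℝ)+1)) t = 0 := by
        have htend : Filter.Tendsto (fun m : ℕ => 1/((m:ℝ)+1)) Filter.atTop (nhds 0) :=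
          tendsto_one_div_add_atTop_nhds_zero_nat
        filter_upwards [htend.eventually_lt_const (show (0:ℝ) < t - a by linarith)] with m hm
        exact hcut_zero a _ t (by linarith [hwidth m]) (by linarith)
      rw [Set.indicator_of_notMem (by simpa using hat)]
      exact Filter.Tendsto.congr' (hev.mono fun m hm => hm.symm) tendsto_const_nhds
  have dct2 : ∀ (μ : Measure ℝ), IsFiniteMeasure μ →
      Filter.Tendsto (fun m : ℕ => ∫ y, cutf a (a + 1/((m:ℝ)+1)) y ∂μ) Filter.atTop
      (nhds ((μ (Set.Iic a)).toReal)) := by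
    intro μ hfin
    have := tendsto_integral_of_dominated_convergence
      (μ := μ) (F := fun m y => cutf a (a + 1/((m:ℝ)+1)) y)
      (f := Set.indicator (Set.Iic a) (fun _ => (1:ℝ))) (fun _ => (1:ℝ))
      (fun m => ((hcut_smooth _ _).continuous).aestronglyMeasurable)
      (integrable_const 1)
      (fun m => Filter.Eventually.of_forall (fun t => hcut_bd _ _ t))
      (Filter.Eventually.of_forall hlim2)
    have hind : ∫ y, Set.indicator (Set.Iic a) (fun _ => (1:ℝ)) y ∂μ
        = (μ (Set.Iic a)).toReal := by
      rw [show (Set.indicator (Set.Iic a) (fun _ => (1:ℝ))) = (Set.Iic a).indicator 1 from rfl]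
      exact integral_indicator_one measurableSet_Iic
    rwa [hind] at this
  have hp2 := dct2 μp inferInstance
  have hn2 := dct2 μn inferInstance
  have heq2 : (fun m : ℕ => ∫ y, cutf a (a + 1/((m:ℝ)+1)) y ∂μp)
      = fun m : ℕ => ∫ y, cutf a (a + 1/((m:ℝ)+1)) y ∂μn := funext step1
  rw [heq2] at hp2
  have := tendsto_nhds_unique hp2 hn2
  exact (ENNReal.toReal_eq_toReal_iff' (measure_ne_top μp _) (measure_ne_top μn _)).mp this

theorem statement16' (α : ℝ) (hα : 0 < α) (ν : MeasureTheory.SignedMeasure ℝ)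
    (h : ∀ x : ℝ, (∫ y, Real.exp (-|x - y| / α) ∂ν.toJordanDecomposition.posPart)
      - (∫ y, Real.exp (-|x - y| / α) ∂ν.toJordanDecomposition.negPart) = 0) :
    ν = 0 := by
  have h' : ∀ x : ℝ, ∫ y, Real.exp (-|x - y| / α) ∂ν.toJordanDecomposition.posPart
      = ∫ y, Real.exp (-|x - y| / α) ∂ν.toJordanDecomposition.negPart :=
    fun x => sub_eq_zero.mp (h x)
  have hmeq : ν.toJordanDecomposition.posPart = ν.toJordanDecomposition.negPart :=
    measure_eq _ _ (fun φ hφ hsupp => testEq α hα _ _ h' φ hφ hsupp)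
  have h2 : ν.toJordanDecomposition.toSignedMeasure = ν :=
    ν.toSignedMeasure_toJordanDecomposition
  rw [← h2]
  rw [MeasureTheory.JordanDecomposition.toSignedMeasure]
  rw [sub_eq_zero]
  congr 1

end HelmholtzAux

/-- injectivity of convolution with the Helmholtz Green's function: if
`∫ e^{−|x−y|/α} dν(y) = 0` for every `x`, then `ν = 0`. -/
theorem statement16 (α : ℝ) (hα : 0 < α) (ν : MeasureTheory.SignedMeasure ℝ)
    (h : ∀ x : ℝ, sint ν (fun y => Real.exp (-|x - y| / α)) = 0) :
    ν = 0 := by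
  apply statement16' α hα ν
  intro x
  have := h x
  simpa [sint] using this
end
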